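/- arXiv:1801.05376 — 3 statements merged into one kernel-verified Lean document; each statement's English description precedes it below -/
import Mathlib

section
/- For every overlap-free infinite binary word u, every u-special factor of u is a factor of the Thue–Morse word t. -/
/-- The factor of the infinite word `u` of length `m` starting at position `i`. -/
def factorAt {k : ℕ} (u : ℕ → Fin k) (i m : ℕ) : List (Fin k) :=
  (List.range m).map fun j => u (i + j)

/-- `v` is a factor of the infinite word `u`. -/
def IsFactor {k : ℕ} (v : List (Fin k)) (u : ℕ → Fin k) : Prop :=
  ∃ i, v = factorAt u i v.length

/-- Subword complexity: the number of distinct factors of length `n`. -/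
noncomputable def complexity {k : ℕ} (u : ℕ → Fin k) (n : ℕ) : ℕ :=
  Set.ncard {v : List (Fin k) | v.length = n ∧ IsFactor v u}

/-- The word `w` has period `q` (`1 ≤ q ≤ |w|`, and `w(i) = w(i+q)` whenever defined). -/
def HasPer {A : Type*} (w : List A) (q : ℕ) : Prop :=
  1 ≤ q ∧ q ≤ w.length ∧ ∀ i, i + q < w.length → w[i]? = w[i + q]?

/-- The minimal period of a finite word. -/
noncomputable def minPer {A : Type*} (w : List A) : ℕ := sInf {q | HasPer w q}

/-- The exponent of a finite word: its length divided by its minimal period. -/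
noncomputable def exponent {A : Type*} (w : List A) : ℝ := (w.length : ℝ) / (minPer w : ℝ)

/-- `u` is `α`-power-free: no nonempty factor has exponent `≥ α`. -/
def PowerFree {k : ℕ} (α : ℝ) (u : ℕ → Fin k) : Prop :=
  ∀ v : List (Fin k), v ≠ [] → IsFactor v u → exponent v < α

/-- `u` is `α⁺`-power-free: no nonempty factor has exponent `> α`. -/
def PowerFreePlus {k : ℕ} (α : ℝ) (u : ℕ → Fin k) : Prop :=
  ∀ v : List (Fin k), v ≠ [] → IsFactor v u → exponent v ≤ α

/-- Overlap-free means `2⁺`-power-free. -/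
def OverlapFree {k : ℕ} (u : ℕ → Fin k) : Prop := PowerFreePlus 2 u

open Fin.NatCast in
/-- The Thue–Morse word: `t n` is the number of 1's, mod 2, in the binary expansion of `n`. -/
def thueMorse : ℕ → Fin 2 := fun n => ((Nat.digits 2 n).count 1 : Fin 2)

namespace TM

abbrev W := ℕ → Fin 2

/-- no factor of shape axaxa : for every position i and period q ≥ 1 there is a mismatch -/
def OFw (u : W) : Prop := ∀ i q : ℕ, 1 ≤ q → ∃ j ≤ q, u (i + j) ≠ u (i + j + q)

lemma fin2_ne_iff : ∀ x y : Fin 2, x ≠ y ↔ y = x + 1 := by decide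
lemma fin2_add_add : ∀ x : Fin 2, x + 1 + 1 = x := by decide
lemma fin2_self_ne : ∀ x : Fin 2, x ≠ x + 1 := by decide
lemma fin2_ne_iff' : ∀ x y : Fin 2, x ≠ y → x = y + 1 := by decide
lemma fin2_eq_of_ne_ne : ∀ x y z : Fin 2, x ≠ y → y ≠ z → x = z := by decide

lemma factorAt_length {k : ℕ} (u : ℕ → Fin k) (i m : ℕ) : (factorAt u i m).length = m := by
  simp [factorAt]

lemma factorAt_get? {k : ℕ} (u : ℕ → Fin k) (i m j : ℕ) (h : j < m) :
    (factorAt u i m)[j]? = some (u (i + j)) := by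
  simp only [factorAt, List.getElem?_map, List.getElem?_range h,
    Option.map_some]

lemma ofw_of_overlapFree (u : W) (hu : OverlapFree u) : OFw u := by
  intro i q hq
  by_contra h
  push_neg at h
  set v := factorAt u i (2 * q + 1) with hv
  have hlen : v.length = 2 * q + 1 := factorAt_length u i _
  have hfac : IsFactor v u := ⟨i, by rw [hlen]⟩
  have hne : v ≠ [] := by
    intro h'
    rw [h'] at hlen; simp at hlen
  have hper : HasPer v q := by
    refine ⟨hq, by omega, ?_⟩
    intro m hm
    rw [hlen] at hm
    rw [factorAt_get? u i _ m (by omega), factorAt_get? u i _ (m + q) (by omega)]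
    have := h m (by omega)
    rw [this]; ring_nf
  have hmem : minPer v ∈ {q' | HasPer v q'} := Nat.sInf_mem ⟨q, hper⟩
  have h1 : 1 ≤ minPer v := hmem.1
  have hle : minPer v ≤ q := Nat.sInf_le hper
  have hexp := hu v hne hfac
  rw [exponent, hlen] at hexp
  have hpos : (0 : ℝ) < (minPer v : ℝ) := by exact_mod_cast h1
  rw [div_le_iff₀ hpos] at hexp
  have : ((2 * q + 1 : ℕ) : ℝ) ≤ ((2 * minPer v : ℕ) : ℝ) := by push_cast; push_cast at hexp; linarith
  have : 2 * q + 1 ≤ 2 * minPer v := by exact_mod_cast this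
  omega

lemma tm_even (n : ℕ) : thueMorse (2 * n) = thueMorse n := by
  rcases Nat.eq_zero_or_pos n with h | h
  · subst h; rfl
  · unfold thueMorse
    rw [Nat.digits_def' (by norm_num : (1:ℕ) < 2) (by omega : 0 < 2 * n)]
    simp [Nat.mul_div_cancel_left, Nat.mul_mod_right]

lemma tm_odd (n : ℕ) : thueMorse (2 * n + 1) = thueMorse n + 1 := by
  unfold thueMorse
  rw [Nat.digits_def' (by norm_num : (1:ℕ) < 2) (by omega : 0 < 2 * n + 1)]
  have h1 : (2 * n + 1) % 2 = 1 := by omega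
  have h2 : (2 * n + 1) / 2 = n := by omega
  rw [h1, h2]
  simp [List.count_cons]
  apply Fin.ext
  simp only [Fin.val_add, Fin.val_natCast, Fin.val_one]
  omega


/-- squares at positions ≥ 1 in an overlap-free word share parity -/
lemma sq_parity (u : W) (hu : OFw u) :
    ∀ d p p', 1 ≤ p → p' = p + d → u p = u (p + 1) → u p' = u (p' + 1) → d % 2 = 0 := by
  intro d
  induction d using Nat.strong_induction_on with
  | _ d IH =>
    intro p p' hp hpd hsp hsp'
    by_contra hodd
    rcases Nat.lt_or_ge d 2 with hd | hd
    · -- d = 1 : three in a row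
      have hd' : d = 1 := by omega
      subst hd'; subst hpd
      obtain ⟨j, hj, hne⟩ := hu p 1 le_rfl
      interval_cases j
      · exact hne hsp
      · exact hne hsp'
    · by_cases hmid : ∃ s, p < s ∧ s < p' ∧ u s = u (s + 1)
      · obtain ⟨s, hs1, hs2, hsq⟩ := hmid
        have e1 := IH (s - p) (by omega) p s (by omega) (by omega) hsp hsq
        have e2 := IH (p' - s) (by omega) s p' (by omega) (by omega) hsq hsp'
        omega
      · push_neg at hmid
        have halt : ∀ m, p < m → m < p' → u (m + 1) = u m + 1 := by
          intro m h1 h2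
          exact (fin2_ne_iff _ _).mp (hmid m h1 h2)
        rcases Nat.lt_or_ge d 4 with hd3 | hd5
        · -- d = 3
          have hd' : d = 3 := by omega
          subst hd'
          obtain ⟨P, rfl⟩ : ∃ P, p = P + 1 := ⟨p - 1, by omega⟩
          subst hpd
          have hsp2 : u (P + 2) = u (P + 1) := hsp.symm
          have hsp5 : u (P + 5) = u (P + 4) := hsp'.symm
          have a1 : u (P + 3) = u (P + 1) + 1 := by
            have h := halt (P + 2) (by omega) (by omega)
            rw [hsp2] at h; exact h
          have a2 : u (P + 4) = u (P + 1) := by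
            have h := halt (P + 3) (by omega) (by omega)
            rw [a1, fin2_add_add] at h; exact h
          have a3 : u (P + 5) = u (P + 1) := hsp5.trans a2
          have b : u P = u (P + 1) + 1 := by
            refine fin2_ne_iff' _ _ ?_
            intro he
            obtain ⟨j, hj, hne⟩ := hu P 1 le_rfl
            interval_cases j
            · exact hne he
            · exact hne hsp
          have c : u (P + 6) = u (P + 1) + 1 := by
            have hne6 : u (P + 6) ≠ u (P + 5) := by
              intro he
              obtain ⟨j, hj, hne⟩ := hu (P + 4) 1 le_rfl
              interval_cases j
              · exact hne hsp5.symm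
              · exact hne he.symm
            rw [← a3]
            exact fin2_ne_iff' _ _ hne6
          obtain ⟨j, hj, hne⟩ := hu P 3 (by omega)
          interval_cases j
          · exact hne (b.trans a1.symm)
          · exact hne a2.symm
          · exact hne (hsp2.trans a3.symm)
          · exact hne (a1.trans c.symm)
        · -- d ≥ 5 : alternation gives overlap of period 2
          obtain ⟨j, hj, hne⟩ := hu (p + 1) 2 (by omega)
          apply hne
          have a1 := halt (p + 1 + j) (by omega) (by omega)
          have a2 := halt (p + 2 + j) (by omega) (by omega)
          have e1 : p + 1 + j + 1 = p + 2 + j := by omega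
          have e2 : p + 2 + j + 1 = p + 1 + j + 2 := by omega
          rw [e1] at a1
          rw [e2] at a2
          rw [a2, a1, fin2_add_add]

/-- unordered square parity -/
lemma sq_parity' (u : W) (hu : OFw u) (p p' : ℕ) (hp : 1 ≤ p) (hp' : 1 ≤ p')
    (h1 : u p = u (p + 1)) (h2 : u p' = u (p' + 1)) : p % 2 = p' % 2 := by
  rcases Nat.lt_trichotomy p p' with h | h | h
  · have := sq_parity u hu (p' - p) p p' hp (by omega) h1 h2; omega
  · omega
  · have := sq_parity u hu (p - p') p' p hp' (by omega) h2 h1; omega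

/-- existence of a square at a position ≥ 1 -/
lemma exists_sq (u : W) (hu : OFw u) : ∃ p, 1 ≤ p ∧ u p = u (p + 1) := by
  by_contra h
  push_neg at h
  have halt : ∀ m, 1 ≤ m → u (m + 1) = u m + 1 := fun m hm => (fin2_ne_iff _ _).mp (h m hm)
  obtain ⟨j, hj, hne⟩ := hu 1 2 (by omega)
  apply hne
  have a1 := halt (1 + j) (by omega)
  have a2 := halt (1 + j + 1) (by omega)
  have e2 : 1 + j + 1 + 1 = 1 + j + 2 := by omega
  rw [e2] at a2
  rw [a2, a1, fin2_add_add]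

/-- de-substitution: there is an offset r ≤ 2 so that u decomposes into μ-blocks after r -/
lemma decomp (u : W) (hu : OFw u) :
    ∃ r, r ≤ 2 ∧ (∀ m, u (r + 2 * m + 1) = u (r + 2 * m) + 1) ∧
      (r = 2 → u 1 = u 0) ∧ (∀ p, 1 ≤ p → u p = u (p + 1) → (p + r) % 2 = 1) := by
  obtain ⟨p₀, hp₀, hsq₀⟩ := exists_sq u hu
  have par : ∀ p, 1 ≤ p → u p = u (p + 1) → p % 2 = p₀ % 2 := fun p hp h =>
    sq_parity' u hu p p₀ hp hp₀ h hsq₀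
  rcases Nat.even_or_odd p₀ with he | ho
  all_goals first | (rw [Nat.even_iff] at he) | (rw [Nat.odd_iff] at ho) | skip
  · -- p₀ even : r = 1
    refine ⟨1, by omega, ?_, by omega, ?_⟩
    · intro m
      refine (fin2_ne_iff _ _).mp ?_
      intro hsq
      have := par (1 + 2 * m) (by omega) hsq
      omega
    · intro p hp hsq
      have := par p hp hsq
      omega
  · by_cases h01 : u 0 = u 1
    · -- r = 2
      refine ⟨2, le_rfl, ?_, fun _ => h01.symm, ?_⟩
      · intro m
        refine (fin2_ne_iff _ _).mp ?_
        intro hsq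
        have := par (2 + 2 * m) (by omega) hsq
        omega
      · intro p hp hsq
        have := par p hp hsq
        omega
    · -- r = 0
      refine ⟨0, by omega, ?_, by omega, ?_⟩
      · intro m
        rcases Nat.eq_zero_or_pos m with hm | hm
        · subst hm
          simpa using (fin2_ne_iff _ _).mp h01
        · refine (fin2_ne_iff _ _).mp ?_
          intro hsq
          have := par (0 + 2 * m) (by omega) hsq
          omega
      · intro p hp hsq
        have := par p hp hsq
        omega

/-- the inner word survives overlap-freeness -/
lemma ofw_inner (u : W) (hu : OFw u) (r : ℕ)
    (hblk : ∀ m, u (r + 2 * m + 1) = u (r + 2 * m) + 1) :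
    OFw (fun m => u (r + 2 * m)) := by
  intro i q hq
  by_contra h
  push_neg at h
  obtain ⟨j, hj, hne⟩ := hu (r + 2 * i) (2 * q) (by omega)
  apply hne
  rcases Nat.even_or_odd j with ⟨a, ha⟩ | ⟨a, ha⟩
  · have e1 : r + 2 * i + j = r + 2 * (i + a) := by omega
    rw [e1, show r + 2 * (i + a) + 2 * q = r + 2 * (i + a + q) from by omega]
    exact h a (by omega)
  · have e1 : r + 2 * i + j = r + 2 * (i + a) + 1 := by omega
    rw [e1, show r + 2 * (i + a) + 1 + 2 * q = r + 2 * (i + a + q) + 1 from by omega,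
      hblk (i + a), hblk (i + a + q)]
    rw [h a (by omega)]

open Fin.NatCast in
/-- fuelled Thue-Morse, kernel-computable -/
def tmA : ℕ → ℕ → Fin 2
  | 0, _ => 0
  | f + 1, n => if n = 0 then 0 else ((n % 2 : ℕ) : Fin 2) + tmA f (n / 2)

lemma tmA_eq : ∀ f n, n < 2 ^ f → tmA f n = thueMorse n := by
  intro f
  induction f with
  | zero =>
    intro n hn
    have : n = 0 := by simpa using hn
    subst this
    simp [tmA, thueMorse]
  | succ f IH =>
    intro n hn
    rcases Nat.eq_zero_or_pos n with h0 | h0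
    · subst h0; simp [tmA, thueMorse]
    · rw [tmA, if_neg (by omega)]
      rw [IH (n / 2) (by omega)]
      rcases Nat.even_or_odd n with ⟨a, ha⟩ | ⟨a, ha⟩
      · have h2 : n % 2 = 0 := by omega
        have h3 : n / 2 = a := by omega
        rw [h2, h3]
        have := tm_even a
        rw [show 2 * a = n from by omega] at this
        rw [this]
        simp
      · have h2 : n % 2 = 1 := by omega
        have h3 : n / 2 = a := by omega
        rw [h2, h3]
        have := tm_odd a
        rw [show 2 * a + 1 = n from by omega] at this
        rw [this]
        simp [add_comm]

/-- extend a finite word by a constant letter -/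
def ext (n : ℕ) (g : Fin n → Fin 2) (x : Fin 2) : ℕ → Fin 2 :=
  fun m => if h : m < n then g ⟨m, h⟩ else x

/-- overlap-freeness of the length-N window of f -/
def OFF (f : ℕ → Fin 2) (N : ℕ) : Prop :=
  ∀ i < N, ∀ q < N, 1 ≤ q → i + 2 * q < N → ∃ j < q + 1, f (i + j) ≠ f (i + j + q)

instance (f : ℕ → Fin 2) (N : ℕ) [DecidablePred fun m => f m = f m] : Decidable (OFF f N) := by
  unfold OFF; infer_instance

lemma mainBase : ∀ n : Fin 6, ∀ g : Fin (n : ℕ) → Fin 2,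
    OFF (ext _ g 0) ((n : ℕ) + 1) → OFF (ext _ g 1) ((n : ℕ) + 1) →
    ∃ p : Fin 40, ∀ m : Fin (n : ℕ), g m = tmA 7 ((p : ℕ) + (m : ℕ)) := by decide

lemma bndBase : ∀ n : Fin 6, ∀ g : Fin (n : ℕ) → Fin 2, ∀ c e : Fin 2,
    (∀ s < (n : ℕ), 1 ≤ s → s + 1 < (n : ℕ) → ext _ g c s ≠ ext _ g c (s + 1)) →
    OFF (ext _ g c) ((n : ℕ) + 1) →
    OFF (fun m => if m = 0 then e else ext _ g (c + 1) (m - 1)) ((n : ℕ) + 2) →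
    ∃ p : Fin 40, tmA 7 (p : ℕ) = e ∧ ∀ m : Fin (n : ℕ), g m = tmA 7 ((p : ℕ) + 1 + (m : ℕ)) := by
  decide

def MainP (n : ℕ) : Prop := ∀ u : W, OFw u → ∀ i₀ i₁ : ℕ,
  (∀ m, m < n → u (i₀ + m) = u (i₁ + m)) → u (i₀ + n) = 0 → u (i₁ + n) = 1 →
  ∃ p, ∀ m, m < n → thueMorse (p + m) = u (i₀ + m)

def BndP (n : ℕ) : Prop := ∀ u : W, OFw u → ∀ j : ℕ,
  (∀ m, m < n → u m = u (j + 1 + m)) → u (j + 1 + n) = u n + 1 →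
  ∃ p, thueMorse p = u j ∧ ∀ m, m < n → thueMorse (p + 1 + m) = u m

lemma interior_square (u : W) (hu : OFw u) (i n : ℕ) (hn : 6 ≤ n)
    (h : ∀ s, 1 ≤ s → s + 1 < n → u (i + s) ≠ u (i + s + 1)) : False := by
  have halt : ∀ s, 1 ≤ s → s + 1 < n → u (i + s + 1) = u (i + s) + 1 := fun s h1 h2 =>
    (fin2_ne_iff _ _).mp (h s h1 h2)
  obtain ⟨j, hj, hne⟩ := hu (i + 1) 2 (by omega)
  apply hne
  have a1 := halt (1 + j) (by omega) (by omega)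
  have a2 := halt (2 + j) (by omega) (by omega)
  rw [show i + (1 + j) + 1 = i + 1 + j + 1 from by omega, show i + (1 + j) = i + 1 + j from by omega] at a1
  rw [show i + (2 + j) + 1 = i + 1 + j + 2 from by omega, show i + (2 + j) = i + 1 + j + 1 from by omega] at a2
  rw [a2, a1, fin2_add_add]

lemma fin2_zero_ne_one : (0 : Fin 2) ≠ 1 := by decide

lemma bndStep (n : ℕ) (IH : ∀ q, q < n → MainP q ∧ BndP q) : BndP n := by
  intro u hu j hmatch hnext
  by_cases hsqe : ∃ s, 1 ≤ s ∧ s + 1 < n ∧ u s = u (s + 1)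
  · -- inductive step
    obtain ⟨s, hs1, hs2, hsq⟩ := hsqe
    have hsq' : u (j + 1 + s) = u (j + 1 + s + 1) := by
      have h1 := hmatch s (by omega)
      have h2 := hmatch (s + 1) (by omega)
      rw [show j + 1 + (s + 1) = j + 1 + s + 1 from by omega] at h2
      rw [← h1, ← h2]
      exact hsq
    obtain ⟨r, hr2, hblk, hsq01, hpar⟩ := decomp u hu
    have hp1 := hpar s hs1 hsq
    have hp2 := hpar (j + 1 + s) (by omega) (by rw [show j + 1 + s + 1 = j + 1 + s + 1 from rfl]; exact hsq')
    obtain ⟨k, hk⟩ : ∃ k, j + 1 = 2 * k := ⟨(j + 1) / 2, by omega⟩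
    have hk1 : 1 ≤ k := by omega
    have hu' : OFw (fun m => u (r + 2 * m)) := ofw_inner u hu r hblk
    interval_cases r
    · -- r = 0
      rcases Nat.even_or_odd n with ⟨q, hq⟩ | ⟨q, hq⟩
      · -- n even, n = 2q : recurse into BndP q
        have hq2 : n = 2 * q := by omega
        have hqlt : q < n := by omega
        obtain ⟨p, hpe, hpm⟩ := (IH q hqlt).2 (fun m => u (0 + 2 * m)) hu' (k - 1)
          (by
            intro m hm
            show u (0 + 2 * m) = u (0 + 2 * (k - 1 + 1 + m))
            rw [show 0 + 2 * (k - 1 + 1 + m) = j + 1 + 2 * m from by omega,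
              show 0 + 2 * m = 2 * m from by omega]
            exact hmatch (2 * m) (by omega))
          (by
            show u (0 + 2 * (k - 1 + 1 + q)) = u (0 + 2 * q) + 1
            rw [show 0 + 2 * (k - 1 + 1 + q) = j + 1 + n from by omega,
              show 0 + 2 * q = n from by omega]
            exact hnext)
        refine ⟨2 * p + 1, ?_, ?_⟩
        · rw [tm_odd p, hpe]
          show u (0 + 2 * (k - 1)) + 1 = u j
          have hb := hblk (k - 1)
          rw [show 0 + 2 * (k - 1) + 1 = j from by omega] at hb
          rw [← hb]
        · intro m hm
          rcases Nat.even_or_odd m with ⟨a, ha⟩ | ⟨a, ha⟩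
          · rw [show 2 * p + 1 + 1 + m = 2 * (p + 1 + a) from by omega, tm_even, hpm a (by omega)]
            rw [show 0 + 2 * a = m from by omega]
          · rw [show 2 * p + 1 + 1 + m = 2 * (p + 1 + a) + 1 from by omega, tm_odd, hpm a (by omega)]
            have hb := hblk a
            rw [show 0 + 2 * a + 1 = m from by omega, show 0 + 2 * a = m - 1 from by omega] at hb
            rw [show 0 + 2 * a = m - 1 from by omega, ← hb]
      · -- n odd : contradiction
        exfalso
        have hb1 := hblk q
        rw [show 0 + 2 * q + 1 = n from by omega, show 0 + 2 * q = n - 1 from by omega] at hb1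
        have hb2 := hblk (k + q)
        rw [show 0 + 2 * (k + q) + 1 = j + 1 + n from by omega,
          show 0 + 2 * (k + q) = j + 1 + (n - 1) from by omega] at hb2
        rw [hnext, hb1, ← hmatch (n - 1) (by omega)] at hb2
        exact fin2_self_ne _ (by rw [← hb2, fin2_add_add])
    · -- r = 1
      rcases Nat.even_or_odd n with ⟨q, hq⟩ | ⟨q, hq⟩
      · -- n even : contradiction
        exfalso
        have hb1 := hblk (q - 1)
        rw [show 1 + 2 * (q - 1) + 1 = n from by omega, show 1 + 2 * (q - 1) = n - 1 from by omega] at hb1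
        have hb2 := hblk (k + q - 1)
        rw [show 1 + 2 * (k + q - 1) + 1 = j + 1 + n from by omega,
          show 1 + 2 * (k + q - 1) = j + 1 + (n - 1) from by omega] at hb2
        rw [hnext, hb1, ← hmatch (n - 1) (by omega)] at hb2
        exact fin2_self_ne _ (by rw [← hb2, fin2_add_add])
      · -- n odd, n = 2q + 1 : recurse into BndP q
        have hqlt : q < n := by omega
        obtain ⟨p, hpe, hpm⟩ := (IH q hqlt).2 (fun m => u (1 + 2 * m)) hu' (k - 1)
          (by
            intro m hm
            show u (1 + 2 * m) = u (1 + 2 * (k - 1 + 1 + m))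
            rw [show 1 + 2 * (k - 1 + 1 + m) = j + 1 + (1 + 2 * m) from by omega]
            exact hmatch (1 + 2 * m) (by omega))
          (by
            show u (1 + 2 * (k - 1 + 1 + q)) = u (1 + 2 * q) + 1
            rw [show 1 + 2 * (k - 1 + 1 + q) = j + 1 + n from by omega,
              show 1 + 2 * q = n from by omega]
            exact hnext)
        refine ⟨2 * p, ?_, ?_⟩
        · rw [tm_even p, hpe]
          show u (1 + 2 * (k - 1)) = u j
          rw [show 1 + 2 * (k - 1) = j from by omega]
        · intro m hm
          rcases Nat.eq_zero_or_pos m with hm0 | hm0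
          · subst hm0
            have hb := hblk (k - 1)
            rw [show 1 + 2 * (k - 1) + 1 = j + 1 from by omega,
              show 1 + 2 * (k - 1) = j from by omega] at hb
            have h0 := hmatch 0 (by omega)
            rw [show j + 1 + 0 = j + 1 from by omega] at h0
            rw [show 2 * p + 1 + 0 = 2 * p + 1 from by omega, tm_odd, hpe,
              show 1 + 2 * (k - 1) = j from by omega, ← hb, ← h0]
          · rcases Nat.even_or_odd m with ⟨a, ha⟩ | ⟨a, ha⟩
            · -- m = 2a, a ≥ 1 : m = 2(a-1)+2
              rw [show 2 * p + 1 + m = 2 * (p + 1 + (a - 1)) + 1 from by omega, tm_odd,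
                hpm (a - 1) (by omega)]
              have hb := hblk (a - 1)
              rw [show 1 + 2 * (a - 1) + 1 = m from by omega] at hb
              rw [← hb]
            · -- m = 2a + 1
              rw [show 2 * p + 1 + m = 2 * (p + 1 + a) from by omega, tm_even,
                hpm a (by omega), show 1 + 2 * a = m from by omega]
    · -- r = 2 : impossible
      exfalso
      have h10 : u 1 = u 0 := hsq01 rfl
      have hb := hblk (k - 1)
      rw [show 2 + 2 * (k - 1) + 1 = j + 1 + 1 from by omega,
        show 2 + 2 * (k - 1) = j + 1 from by omega] at hb
      rw [← hmatch 0 (by omega), ← (show u 1 = u (j + 1 + 1) from hmatch 1 (by omega))] at hb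
      rw [h10] at hb
      exact fin2_self_ne _ hb
  · -- base case
    push_neg at hsqe
    have hn5 : n ≤ 5 := by
      by_contra hn
      exact interior_square u hu 0 n (by omega) (fun s h1 h2 => by
        have := hsqe s h1 h2
        rw [show 0 + s = s from by omega]
        exact this)
    have hnlt : n < 6 := by omega
    have hext1 : ∀ m, m ≤ n → ext n (fun m : Fin n => u m) (u n) m = u m := by
      intro m hm
      by_cases h : m < n
      · simp [ext, h]
      · have he : m = n := by omega
        subst he
        simp [ext]
    have hf2 : ∀ m, m ≤ n + 1 →
        (fun m => if m = 0 then u j else ext n (fun m : Fin n => u m) (u n + 1) (m - 1)) m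
          = u (j + m) := by
      intro m hm
      by_cases h0 : m = 0
      · subst h0; simp
      · simp only [if_neg h0]
        by_cases h : m - 1 < n
        · simp only [ext, dif_pos h]
          have := hmatch (m - 1) h
          rw [show j + 1 + (m - 1) = j + m from by omega] at this
          exact this
        · have he : m - 1 = n := by omega
          rw [he]
          simp only [ext, dif_neg (lt_irrefl n)]
          rw [← hnext, show j + 1 + n = j + m from by omega]
    have hOFF1 : OFF (ext n (fun m : Fin n => u m) (u n)) (n + 1) := by
      intro i hi q hq' h1 h2
      obtain ⟨j', hj', hne⟩ := hu i q h1
      refine ⟨j', by omega, ?_⟩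
      rw [hext1 (i + j') (by omega), hext1 (i + j' + q) (by omega)]
      exact hne
    have hOFF2 : OFF (fun m => if m = 0 then u j
        else ext n (fun m : Fin n => u m) (u n + 1) (m - 1)) (n + 2) := by
      intro i hi q hq' h1 h2
      obtain ⟨j', hj', hne⟩ := hu (j + i) q h1
      refine ⟨j', by omega, ?_⟩
      rw [hf2 (i + j') (by omega), hf2 (i + j' + q) (by omega)]
      rw [show j + (i + j') = j + i + j' from by omega,
        show j + (i + j' + q) = j + i + j' + q from by omega]
      exact hne
    have hnosq : ∀ s < n, 1 ≤ s → s + 1 < n →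
        ext n (fun m : Fin n => u m) (u n) s ≠ ext n (fun m : Fin n => u m) (u n) (s + 1) := by
      intro s hs h1 h2
      rw [hext1 s (by omega), hext1 (s + 1) (by omega)]
      exact hsqe s h1 h2
    obtain ⟨p, hpe, hpm⟩ := bndBase ⟨n, hnlt⟩ (fun m : Fin n => u m) (u n) (u j) hnosq hOFF1 hOFF2
    refine ⟨(p : ℕ), ?_, ?_⟩
    · rw [← tmA_eq 7 (p : ℕ) (by have := p.2; omega)]
      exact hpe
    · intro m hm
      have h := hpm ⟨m, hm⟩
      rw [← tmA_eq 7 ((p : ℕ) + 1 + m) (by have := p.2; omega)]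
      exact h.symm

lemma fin2_cancel : ∀ x y : Fin 2, x + 1 = y + 1 → x = y := by decide

lemma mainStep (n : ℕ) (IH : ∀ q, q < n → MainP q ∧ BndP q) : MainP n := by
  intro u hu i₀ i₁ hm h0 h1
  have hne01 : i₀ ≠ i₁ := by
    intro h
    rw [h] at h0
    rw [h0] at h1
    exact fin2_zero_ne_one h1
  by_cases hsqe : ∃ s, 1 ≤ s ∧ s + 1 < n ∧ u (i₀ + s) = u (i₀ + s + 1)
  · obtain ⟨s, hs1, hs2, hsq0⟩ := hsqe
    have hsq1 : u (i₁ + s) = u (i₁ + s + 1) := by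
      have a := hm s (by omega)
      have b := hm (s + 1) (by omega)
      rw [show i₀ + (s + 1) = i₀ + s + 1 from by omega,
        show i₁ + (s + 1) = i₁ + s + 1 from by omega] at b
      rw [← a, ← b]
      exact hsq0
    obtain ⟨r, hr2, hblk, hsq01, hpar⟩ := decomp u hu
    have hp0 := hpar (i₀ + s) (by omega) hsq0
    have hp1 := hpar (i₁ + s) (by omega) hsq1
    have hu' : OFw (fun m => u (r + 2 * m)) := ofw_inner u hu r hblk
    rcases Nat.mod_two_eq_zero_or_one (i₀ + r) with hph | hph
    · -- EVEN PHASE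
      by_cases hb0 : i₀ < r
      · exfalso
        have hr : r = 2 := by omega
        have hi0 : i₀ = 0 := by omega
        have h10 := hsq01 hr
        obtain ⟨k, hk⟩ : ∃ k, i₁ = r + 2 * k := ⟨(i₁ - r) / 2, by omega⟩
        have a := hm 0 (by omega)
        have b := hm 1 (by omega)
        rw [hi0] at a b
        have hb := hblk k
        rw [← hk] at hb
        exact fin2_self_ne (u i₁)
          ((show u i₁ = u 0 from a.symm).trans ((show u 0 = u 1 from h10.symm).trans
            ((show u 1 = u (i₁ + 1) from b).trans hb)))
      · by_cases hb1 : i₁ < r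
        · exfalso
          have hr : r = 2 := by omega
          have hi1 : i₁ = 0 := by omega
          have h10 := hsq01 hr
          obtain ⟨k, hk⟩ : ∃ k, i₀ = r + 2 * k := ⟨(i₀ - r) / 2, by omega⟩
          have a := hm 0 (by omega)
          have b := hm 1 (by omega)
          rw [hi1] at a b
          have hb := hblk k
          rw [← hk] at hb
          exact fin2_self_ne (u i₀)
            ((show u i₀ = u 0 from a).trans ((show u 0 = u 1 from h10.symm).trans
              ((show u 1 = u (i₀ + 1) from b.symm).trans hb)))
        · obtain ⟨k₀, hk₀⟩ : ∃ k, i₀ = r + 2 * k := ⟨(i₀ - r) / 2, by omega⟩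
          obtain ⟨k₁, hk₁⟩ : ∃ k, i₁ = r + 2 * k := ⟨(i₁ - r) / 2, by omega⟩
          rcases Nat.even_or_odd n with ⟨q, hq⟩ | ⟨q, hq⟩
          · obtain ⟨p, hp⟩ := (IH q (by omega)).1 (fun m => u (r + 2 * m)) hu' k₀ k₁
              (by
                intro m hm'
                show u (r + 2 * (k₀ + m)) = u (r + 2 * (k₁ + m))
                rw [show r + 2 * (k₀ + m) = i₀ + 2 * m from by omega,
                  show r + 2 * (k₁ + m) = i₁ + 2 * m from by omega]
                exact hm (2 * m) (by omega))
              (by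
                show u (r + 2 * (k₀ + q)) = 0
                rw [show r + 2 * (k₀ + q) = i₀ + n from by omega]
                exact h0)
              (by
                show u (r + 2 * (k₁ + q)) = 1
                rw [show r + 2 * (k₁ + q) = i₁ + n from by omega]
                exact h1)
            refine ⟨2 * p, ?_⟩
            intro m hm'
            rcases Nat.even_or_odd m with ⟨a, ha⟩ | ⟨a, ha⟩
            · rw [show 2 * p + m = 2 * (p + a) from by omega, tm_even, hp a (by omega)]
              show u (r + 2 * (k₀ + a)) = u (i₀ + m)
              rw [show r + 2 * (k₀ + a) = i₀ + m from by omega]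
            · rw [show 2 * p + m = 2 * (p + a) + 1 from by omega, tm_odd, hp a (by omega)]
              show u (r + 2 * (k₀ + a)) + 1 = u (i₀ + m)
              rw [← hblk (k₀ + a), show r + 2 * (k₀ + a) + 1 = i₀ + m from by omega]
          · exfalso
            have b0 := hblk (k₀ + q)
            rw [show r + 2 * (k₀ + q) + 1 = i₀ + n from by omega,
              show r + 2 * (k₀ + q) = i₀ + (n - 1) from by omega] at b0
            have b1 := hblk (k₁ + q)
            rw [show r + 2 * (k₁ + q) + 1 = i₁ + n from by omega,
              show r + 2 * (k₁ + q) = i₁ + (n - 1) from by omega] at b1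
            rw [h0, hm (n - 1) (by omega)] at b0
            rw [h1] at b1
            rw [← b1] at b0
            exact fin2_zero_ne_one b0
    · -- ODD PHASE
      obtain ⟨k₀, hk₀⟩ : ∃ k, i₀ + 1 = r + 2 * k := ⟨(i₀ + 1 - r) / 2, by omega⟩
      obtain ⟨k₁, hk₁⟩ : ∃ k, i₁ + 1 = r + 2 * k := ⟨(i₁ + 1 - r) / 2, by omega⟩
      rcases Nat.even_or_odd n with ⟨q, hq⟩ | ⟨q, hq⟩
      · exfalso
        have b0 := hblk (k₀ + q - 1)
        rw [show r + 2 * (k₀ + q - 1) + 1 = i₀ + n from by omega,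
          show r + 2 * (k₀ + q - 1) = i₀ + (n - 1) from by omega] at b0
        have b1 := hblk (k₁ + q - 1)
        rw [show r + 2 * (k₁ + q - 1) + 1 = i₁ + n from by omega,
          show r + 2 * (k₁ + q - 1) = i₁ + (n - 1) from by omega] at b1
        rw [h0, hm (n - 1) (by omega)] at b0
        rw [h1] at b1
        rw [← b1] at b0
        exact fin2_zero_ne_one b0
      · -- n = 2q+1
        have e0 : u (r + 2 * (k₀ + q)) = 0 := by
          rw [show r + 2 * (k₀ + q) = i₀ + n from by omega]
          exact h0
        have e1 : u (r + 2 * (k₁ + q)) = 1 := by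
          rw [show r + 2 * (k₁ + q) = i₁ + n from by omega]
          exact h1
        have hz : ∀ m, m < q → u (r + 2 * (k₀ + m)) = u (r + 2 * (k₁ + m)) := by
          intro m hm'
          rw [show r + 2 * (k₀ + m) = i₀ + (1 + 2 * m) from by omega,
            show r + 2 * (k₁ + m) = i₁ + (1 + 2 * m) from by omega]
          exact hm (1 + 2 * m) (by omega)
        rcases Nat.eq_zero_or_pos k₀ with hk0z | hk0pos
        · have hk1pos : 1 ≤ k₁ := by omega
          have hbl := hblk (k₁ - 1)
          rw [show r + 2 * (k₁ - 1) + 1 = i₁ from by omega] at hbl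
          have hm0 := hm 0 (by omega)
          obtain ⟨p, hpe, hpm⟩ := (IH q (by omega)).2 (fun m => u (r + 2 * m)) hu' (k₁ - 1)
            (by
              intro m hm'
              show u (r + 2 * m) = u (r + 2 * (k₁ - 1 + 1 + m))
              rw [show r + 2 * (k₁ - 1 + 1 + m) = r + 2 * (k₁ + m) from by omega]
              have := hz m hm'
              rw [show r + 2 * (k₀ + m) = r + 2 * m from by omega] at this
              exact this)
            (by
              show u (r + 2 * (k₁ - 1 + 1 + q)) = u (r + 2 * q) + 1
              rw [show r + 2 * (k₁ - 1 + 1 + q) = r + 2 * (k₁ + q) from by omega, e1,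
                show r + 2 * q = r + 2 * (k₀ + q) from by omega, e0]
              rfl)
          refine ⟨2 * p + 1, ?_⟩
          intro m hm'
          rcases Nat.eq_zero_or_pos m with hm0' | hmpos
          · subst hm0'
            rw [show 2 * p + 1 + 0 = 2 * p + 1 from by omega, tm_odd, hpe, ← hbl]
            exact hm0.symm
          · rcases Nat.even_or_odd m with ⟨a, ha⟩ | ⟨a, ha⟩
            · -- m = 2a = 2(a-1)+2
              rw [show 2 * p + 1 + m = 2 * (p + 1 + (a - 1)) + 1 from by omega, tm_odd,
                hpm (a - 1) (by omega), ← hblk (a - 1),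
                show r + 2 * (a - 1) + 1 = i₀ + m from by omega]
            · rw [show 2 * p + 1 + m = 2 * (p + 1 + a) from by omega, tm_even,
                hpm a (by omega), show r + 2 * a = i₀ + m from by omega]
        · rcases Nat.eq_zero_or_pos k₁ with hk1z | hk1pos
          · have hbl := hblk (k₀ - 1)
            rw [show r + 2 * (k₀ - 1) + 1 = i₀ from by omega] at hbl
            obtain ⟨p, hpe, hpm⟩ := (IH q (by omega)).2 (fun m => u (r + 2 * m)) hu' (k₀ - 1)
              (by
                intro m hm'
                show u (r + 2 * m) = u (r + 2 * (k₀ - 1 + 1 + m))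
                rw [show r + 2 * (k₀ - 1 + 1 + m) = r + 2 * (k₀ + m) from by omega]
                have := hz m hm'
                rw [show r + 2 * (k₁ + m) = r + 2 * m from by omega] at this
                exact this.symm)
              (by
                show u (r + 2 * (k₀ - 1 + 1 + q)) = u (r + 2 * q) + 1
                rw [show r + 2 * (k₀ - 1 + 1 + q) = r + 2 * (k₀ + q) from by omega, e0,
                  show r + 2 * q = r + 2 * (k₁ + q) from by omega, e1]
                rfl)
            refine ⟨2 * p + 1, ?_⟩
            intro m hm'
            rcases Nat.eq_zero_or_pos m with hm0' | hmpos
            · subst hm0'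
              rw [show 2 * p + 1 + 0 = 2 * p + 1 from by omega, tm_odd, hpe, ← hbl,
                show i₀ + 0 = i₀ from by omega]
            · rcases Nat.even_or_odd m with ⟨a, ha⟩ | ⟨a, ha⟩
              · rw [show 2 * p + 1 + m = 2 * (p + 1 + (a - 1)) + 1 from by omega, tm_odd,
                  hpm (a - 1) (by omega)]
                have hzz := hz (a - 1) (by omega)
                rw [show r + 2 * (k₁ + (a - 1)) = r + 2 * (a - 1) from by omega] at hzz
                rw [← hzz, ← hblk (k₀ + (a - 1)),
                  show r + 2 * (k₀ + (a - 1)) + 1 = i₀ + m from by omega]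
              · rw [show 2 * p + 1 + m = 2 * (p + 1 + a) from by omega, tm_even,
                  hpm a (by omega)]
                have hzz := hz a (by omega)
                rw [show r + 2 * (k₁ + a) = r + 2 * a from by omega] at hzz
                rw [← hzz, show r + 2 * (k₀ + a) = i₀ + m from by omega]
          · -- both interior : MainP (q+1)
            have hbl0 := hblk (k₀ - 1)
            rw [show r + 2 * (k₀ - 1) + 1 = i₀ from by omega] at hbl0
            have hbl1 := hblk (k₁ - 1)
            rw [show r + 2 * (k₁ - 1) + 1 = i₁ from by omega] at hbl1
            have hm0 := hm 0 (by omega)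
            rw [show i₀ + 0 = i₀ from by omega, show i₁ + 0 = i₁ from by omega] at hm0
            have hhead : u (r + 2 * (k₀ - 1)) = u (r + 2 * (k₁ - 1)) := by
              apply fin2_cancel
              rw [← hbl0, ← hbl1]
              exact hm0
            obtain ⟨p, hp⟩ := (IH (q + 1) (by omega)).1 (fun m => u (r + 2 * m)) hu'
              (k₀ - 1) (k₁ - 1)
              (by
                intro m hm'
                show u (r + 2 * (k₀ - 1 + m)) = u (r + 2 * (k₁ - 1 + m))
                rcases Nat.eq_zero_or_pos m with h | h
                · subst h
                  rw [show k₀ - 1 + 0 = k₀ - 1 from by omega, show k₁ - 1 + 0 = k₁ - 1 from by omega]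
                  exact hhead
                · rw [show r + 2 * (k₀ - 1 + m) = r + 2 * (k₀ + (m - 1)) from by omega,
                    show r + 2 * (k₁ - 1 + m) = r + 2 * (k₁ + (m - 1)) from by omega]
                  exact hz (m - 1) (by omega))
              (by
                show u (r + 2 * (k₀ - 1 + (q + 1))) = 0
                rw [show r + 2 * (k₀ - 1 + (q + 1)) = r + 2 * (k₀ + q) from by omega]
                exact e0)
              (by
                show u (r + 2 * (k₁ - 1 + (q + 1))) = 1
                rw [show r + 2 * (k₁ - 1 + (q + 1)) = r + 2 * (k₁ + q) from by omega]
                exact e1)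
            refine ⟨2 * p + 1, ?_⟩
            intro m hm'
            rcases Nat.eq_zero_or_pos m with hm0' | hmpos
            · subst hm0'
              have hp0' := hp 0 (by omega)
              rw [Nat.add_zero, Nat.add_zero] at hp0'
              rw [show 2 * p + 1 + 0 = 2 * p + 1 from by omega, tm_odd, hp0', ← hbl0]
              exact rfl
            · rcases Nat.even_or_odd m with ⟨a, ha⟩ | ⟨a, ha⟩
              · rw [show 2 * p + 1 + m = 2 * (p + a) + 1 from by omega, tm_odd,
                  hp a (by omega),
                  show r + 2 * (k₀ - 1 + a) = r + 2 * (k₀ + (a - 1)) from by omega,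
                  ← hblk (k₀ + (a - 1)),
                  show r + 2 * (k₀ + (a - 1)) + 1 = i₀ + m from by omega]
              · rw [show 2 * p + 1 + m = 2 * (p + (a + 1)) from by omega, tm_even,
                  hp (a + 1) (by omega),
                  show r + 2 * (k₀ - 1 + (a + 1)) = i₀ + m from by omega]
  · -- base case
    push_neg at hsqe
    have hn5 : n ≤ 5 := by
      by_contra hn
      exact interior_square u hu i₀ n (by omega) hsqe
    have hext0 : ∀ m, m ≤ n → ext n (fun m : Fin n => u (i₀ + m)) 0 m = u (i₀ + m) := by
      intro m hmle
      by_cases h : m < n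
      · simp [ext, h]
      · have he : m = n := by omega
        subst he
        simp [ext, h0]
    have hext1 : ∀ m, m ≤ n → ext n (fun m : Fin n => u (i₀ + m)) 1 m = u (i₁ + m) := by
      intro m hmle
      by_cases h : m < n
      · simp only [ext, dif_pos h]
        exact hm m h
      · have he : m = n := by omega
        subst he
        simp [ext, h1]
    have hOFF0 : OFF (ext n (fun m : Fin n => u (i₀ + m)) 0) (n + 1) := by
      intro i hi q hq' hq1 h2
      obtain ⟨j', hj', hne⟩ := hu (i₀ + i) q hq1
      refine ⟨j', by omega, ?_⟩
      rw [hext0 (i + j') (by omega), hext0 (i + j' + q) (by omega)]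
      rw [show i₀ + (i + j') = i₀ + i + j' from by omega,
        show i₀ + (i + j' + q) = i₀ + i + j' + q from by omega]
      exact hne
    have hOFF1 : OFF (ext n (fun m : Fin n => u (i₀ + m)) 1) (n + 1) := by
      intro i hi q hq' hq1 h2
      obtain ⟨j', hj', hne⟩ := hu (i₁ + i) q hq1
      refine ⟨j', by omega, ?_⟩
      rw [hext1 (i + j') (by omega), hext1 (i + j' + q) (by omega)]
      rw [show i₁ + (i + j') = i₁ + i + j' from by omega,
        show i₁ + (i + j' + q) = i₁ + i + j' + q from by omega]
      exact hne
    obtain ⟨p, hp⟩ := mainBase ⟨n, by omega⟩ (fun m : Fin n => u (i₀ + m)) hOFF0 hOFF1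
    refine ⟨(p : ℕ), ?_⟩
    intro m hm'
    have h := hp ⟨m, hm'⟩
    rw [← tmA_eq 7 ((p : ℕ) + m) (by have := p.2; omega)]
    exact h.symm

theorem mainAll : ∀ n, MainP n ∧ BndP n := by
  intro n
  induction n using Nat.strong_induction_on with
  | _ n IH => exact ⟨mainStep n IH, bndStep n IH⟩

end TM


/-- For an overlap-free infinite binary word `u`, every `u`-special factor
(a factor `v` with both `v0` and `v1` factors of `u`) is a Thue–Morse factor. -/
theorem special_factors_are_TM (u : ℕ → Fin 2) (hu : OverlapFree u)
    (v : List (Fin 2)) (h0 : IsFactor (v ++ [0]) u) (h1 : IsFactor (v ++ [1]) u) :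
    IsFactor v thueMorse := by
  obtain ⟨i₀, h0e⟩ := h0
  obtain ⟨i₁, h1e⟩ := h1
  have hofw : TM.OFw u := TM.ofw_of_overlapFree u hu
  set n := v.length with hn
  have hlen0 : (v ++ [0]).length = n + 1 := by simp [hn]
  have hlen1 : (v ++ [1]).length = n + 1 := by simp [hn]
  rw [hlen0] at h0e
  rw [hlen1] at h1e
  have hv0 : ∀ m, m < n → v[m]? = some (u (i₀ + m)) := by
    intro m hm
    have h := congrArg (fun l => l[m]?) h0e
    rw [TM.factorAt_get? u i₀ (n + 1) m (by omega), List.getElem?_append_left hm] at h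
    exact h
  have hv1 : ∀ m, m < n → v[m]? = some (u (i₁ + m)) := by
    intro m hm
    have h := congrArg (fun l => l[m]?) h1e
    rw [TM.factorAt_get? u i₁ (n + 1) m (by omega), List.getElem?_append_left hm] at h
    exact h
  have hend0 : u (i₀ + n) = 0 := by
    have h := congrArg (fun l => l[n]?) h0e
    rw [TM.factorAt_get? u i₀ (n + 1) n (by omega), List.getElem?_concat_length] at h
    exact (Option.some.inj h).symm
  have hend1 : u (i₁ + n) = 1 := by
    have h := congrArg (fun l => l[n]?) h1e
    rw [TM.factorAt_get? u i₁ (n + 1) n (by omega), List.getElem?_concat_length] at h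
    exact (Option.some.inj h).symm
  have hmatch : ∀ m, m < n → u (i₀ + m) = u (i₁ + m) := by
    intro m hm
    have a := hv0 m hm
    have b := hv1 m hm
    rw [a] at b
    exact Option.some.inj b
  obtain ⟨p, hp⟩ := (TM.mainAll n).1 u hofw i₀ i₁ hmatch hend0 hend1
  refine ⟨p, ?_⟩
  apply List.ext_getElem?
  intro m
  by_cases hm : m < n
  · rw [hv0 m hm, TM.factorAt_get? thueMorse p n m hm, hp m hm]
  · rw [List.getElem?_eq_none_iff.mpr (by omega), List.getElem?_eq_none_iff.mpr (by rw [TM.factorAt_length]; omega)]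
end

section
/- For the twisted Thue–Morse word t′, the number D_{t′}(n) of t′-special factors of length n > 0 is: 4 if 2^{k+1} < n ≤ 3·2^k for some k ≥ 0; 3 if n = 4 or 3·2^k < n ≤ 7·2^{k−1} for some k ≥ 1; and 2 otherwise. -/
set_option maxRecDepth 40000


open Fin.NatCast in
/-- The twisted Thue–Morse word: `t' n` is the number of 0's, mod 2,
in the binary expansion of `n` (the expansion of 0 being empty). -/
def twistedTM : ℕ → Fin 2 := fun n => ((Nat.digits 2 n).count 0 : Fin 2)

/-- The number of `u`-special factors of length `n` of a binary word `u`. -/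
noncomputable def numSpecial (u : ℕ → Fin 2) (n : ℕ) : ℕ :=
  Set.ncard {v : List (Fin 2) | v.length = n ∧ IsFactor (v ++ [0]) u ∧ IsFactor (v ++ [1]) u}


-- computable model
def tpF : ℕ → ℕ → Bool
  | _, 0 => false
  | 0, _+1 => false
  | f+1, n+1 => if (n+1) % 2 = 0 then !(tpF f ((n+1)/2)) else tpF f ((n+1)/2)

def tp (n : ℕ) : Bool := tpF n n

lemma tpF_mono : ∀ n f f', n ≤ f → n ≤ f' → tpF f n = tpF f' n := by
  intro n
  induction n using Nat.strong_induction_on with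
  | _ n ih =>
    match n with
    | 0 => intro f f' _ _; cases f <;> cases f' <;> rfl
    | n+1 =>
      intro f f' hf hf'
      match f, f' with
      | 0, _ => omega
      | _+1, 0 => omega
      | g+1, g'+1 =>
        simp only [tpF]
        have h2 : (n+1)/2 < n+1 := Nat.div_lt_self (by omega) (by omega)
        rw [ih ((n+1)/2) h2 g g' (by omega) (by omega)]

lemma tp_rec (n : ℕ) (h : 1 ≤ n) :
    tp n = if n % 2 = 0 then !(tp (n/2)) else tp (n/2) := by
  obtain ⟨k, rfl⟩ : ∃ k, n = k + 1 := ⟨n - 1, by omega⟩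
  show tpF (k+1) (k+1) = _
  simp only [tpF]
  rw [tpF_mono ((k+1)/2) k ((k+1)/2) (by omega) (le_refl _)]
  rfl

lemma tm_odd (q : ℕ) : twistedTM (2*q+1) = twistedTM q := by
  unfold twistedTM
  rw [Nat.digits_def' (by norm_num : 1 < 2) (by omega : 0 < 2*q+1)]
  have h1 : (2*q+1) % 2 = 1 := by omega
  have h2 : (2*q+1) / 2 = q := by omega
  rw [h1, h2]
  simp

lemma tm_even (q : ℕ) (h : 1 ≤ q) : twistedTM (2*q) = twistedTM q + 1 := by
  unfold twistedTM
  rw [Nat.digits_def' (by norm_num : 1 < 2) (by omega : 0 < 2*q)]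
  have h1 : (2*q) % 2 = 0 := by omega
  have h2 : (2*q) / 2 = q := by omega
  rw [h1, h2]
  simp [add_comm]
  apply Fin.ext
  simp [Fin.val_add, Fin.val_natCast]
  omega

lemma tm_tp : ∀ n, twistedTM n = if tp n then 1 else 0 := by
  intro n
  induction n using Nat.strong_induction_on with
  | _ n ih =>
    rcases Nat.eq_zero_or_pos n with h0 | h1
    · subst h0; simp [twistedTM, tp, tpF]
    · rcases Nat.even_or_odd n with ⟨q, hq⟩ | ⟨q, hq⟩
      · have hq1 : 1 ≤ q := by omega
        have hn : n = 2*q := by omega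
        have htp : tp n = !(tp q) := by
          rw [tp_rec n h1, if_pos (by omega : n % 2 = 0), show n/2 = q from by omega]
        rw [hn, tm_even q hq1, ← hn, htp, ih q (by omega)]
        rcases Bool.eq_false_or_eq_true (tp q) with h | h <;> rw [h] <;> decide
      · have hn : n = 2*q+1 := by omega
        have htp : tp n = tp q := by
          rw [tp_rec n h1, if_neg (by omega : ¬ n % 2 = 0), show n/2 = q from by omega]
        rw [hn, tm_odd q, ← hn, htp, ih q (by omega)]

-- ## Window lemmas
abbrev W (p ℓ : ℕ) : List (Fin 2) := factorAt twistedTM p ℓ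

lemma W_length (p ℓ : ℕ) : (W p ℓ).length = ℓ := by simp [factorAt]

lemma W_zero (p : ℕ) : W p 0 = [] := rfl

lemma W_snoc (p ℓ : ℕ) : W p (ℓ+1) = W p ℓ ++ [twistedTM (p+ℓ)] := by
  simp only [W, factorAt]
  rw [List.range_succ, List.map_append]
  rfl

lemma W_cons (p ℓ : ℕ) : W p (ℓ+1) = twistedTM p :: W (p+1) ℓ := by
  simp only [W, factorAt]
  rw [List.range_succ_eq_map, List.map_cons, List.map_map]
  congr 1
  apply List.map_congr_left
  intro a _
  simp [Function.comp]
  congr 1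
  omega

lemma W_append (p a b : ℕ) : W p (a+b) = W p a ++ W (p+a) b := by
  induction b with
  | zero => simp [W_zero]
  | succ b ihb => rw [show a + (b+1) = (a+b)+1 from rfl, W_snoc, ihb, W_snoc,
      List.append_assoc, Nat.add_assoc]

lemma W_take (p a b : ℕ) (h : a ≤ b) : (W p b).take a = W p a := by
  rw [show b = a + (b - a) from by omega, W_append]
  exact List.take_left' (W_length p a)

lemma W_getElem (p ℓ i : ℕ) (h : i < ℓ) :
    (W p ℓ)[i]'(by rw [W_length]; exact h) = twistedTM (p+i) := by
  simp [factorAt]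

lemma W_congr {p p' ℓ : ℕ} (h : W p ℓ = W p' ℓ) (i : ℕ) (hi : i < ℓ) :
    twistedTM (p+i) = twistedTM (p'+i) := by
  rw [← W_getElem p ℓ i hi, ← W_getElem p' ℓ i hi]
  congr 1

-- computable window
def Wc (p ℓ : ℕ) : List (Fin 2) := (List.range ℓ).map fun j => if tp (p+j) then 1 else 0

lemma Wc_eq (p ℓ : ℕ) : W p ℓ = Wc p ℓ := by
  simp only [W, factorAt, Wc]
  apply List.map_congr_left
  intro a _
  exact tm_tp (p+a)

-- ## the doubling morphism
def mu : List (Fin 2) → List (Fin 2)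
  | [] => []
  | a :: s => (a+1) :: a :: mu s

lemma mu_append (x y : List (Fin 2)) : mu (x ++ y) = mu x ++ mu y := by
  induction x with
  | nil => rfl
  | cons a s ih => simp [mu, ih]

lemma mu_length (x : List (Fin 2)) : (mu x).length = 2 * x.length := by
  induction x with
  | nil => rfl
  | cons a s ih => simp [mu, ih]; omega

lemma mu_inj : Function.Injective mu := by
  intro x
  induction x with
  | nil => intro y h; cases y with
    | nil => rfl
    | cons b t => simp [mu] at h
  | cons a s ih => intro y h; cases y with
    | nil => simp [mu] at h
    | cons b t =>
      simp only [mu, List.cons.injEq] at h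
      obtain ⟨h1, h2, h3⟩ := h
      rw [h2, ih h3]

def nu : List (Fin 2) → List (Fin 2)
  | [] => []
  | a :: s => a :: mu s

lemma nu_inj : Function.Injective nu := by
  intro x y h
  cases x with
  | nil => cases y with
    | nil => rfl
    | cons b t => simp [nu] at h
  | cons a s => cases y with
    | nil => simp [nu] at h
    | cons b t =>
      simp only [nu, List.cons.injEq] at h
      exact by rw [h.1, mu_inj h.2]

-- t' is a mu-image away from the origin
lemma tm_ne (q : ℕ) (h : 1 ≤ q) : twistedTM (2*q) ≠ twistedTM (2*q+1) := by
  rw [tm_even q h, tm_odd q]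
  have : ∀ a : Fin 2, a + 1 ≠ a := by decide
  exact this _

lemma W_mu (q : ℕ) (h : 1 ≤ q) : ∀ r, W (2*q) (2*r) = mu (W q r) := by
  intro r
  induction r with
  | zero => rfl
  | succ r ih =>
    rw [show 2*(r+1) = 2*r+1+1 from rfl, W_snoc, W_snoc, show r+1 = r+1 from rfl, W_snoc,
      mu_append, ih]
    have h1 : twistedTM (2*q+2*r) = twistedTM (q+r) + 1 := by
      rw [show 2*q+2*r = 2*(q+r) from by ring]; exact tm_even _ (by omega)
    have h2 : twistedTM (2*q+(2*r+1)) = twistedTM (q+r) := by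
      rw [show 2*q+(2*r+1) = 2*(q+r)+1 from by ring]; exact tm_odd _
    rw [h1, h2]
    simp [mu]

lemma W_odd (q r : ℕ) : W (2*q+1) (2*r+1) = twistedTM q :: mu (W (q+1) r) := by
  rw [show 2*r+1 = 1 + 2*r from by omega, W_append]
  have h1 : W (2*q+1) 1 = [twistedTM q] := by
    rw [show (1:ℕ) = 0+1 from rfl, W_snoc, W_zero]
    simp [tm_odd]
  rw [h1, show 2*q+1+1 = 2*(q+1) from by omega, W_mu (q+1) (by omega)]
  rfl

-- ## occurrence localization
def Cst (ℓ K : ℕ) : Prop := ∀ p, 2 ≤ p → ∃ p', 2 ≤ p' ∧ p' ≤ K ∧ W p' ℓ = W p ℓ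

lemma W_two (p : ℕ) : W p 2 = [twistedTM p, twistedTM (p+1)] := by
  simp [W, factorAt, List.range_succ]

lemma C2 : Cst 2 9 := by
  intro p _
  have hv : ∀ m, twistedTM m = if tp m then 1 else 0 := tm_tp
  rcases hb0 : tp p <;> rcases hb1 : tp (p+1)
  · exact ⟨9, by norm_num, by norm_num, by rw [W_two, W_two, hv p, hv (p+1), hv 9, hv 10, hb0, hb1]; decide⟩
  · exact ⟨4, by norm_num, by norm_num, by rw [W_two, W_two, hv p, hv (p+1), hv 4, hv 5, hb0, hb1]; decide⟩
  · exact ⟨2, by norm_num, by norm_num, by rw [W_two, W_two, hv p, hv (p+1), hv 2, hv 3, hb0, hb1]; decide⟩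
  · exact ⟨5, by norm_num, by norm_num, by rw [W_two, W_two, hv p, hv (p+1), hv 5, hv 6, hb0, hb1]; decide⟩

lemma Cstep {ℓ' K' : ℕ} (hC : Cst ℓ' K') (ℓ : ℕ) (h2 : 2 ≤ ℓ') (hK : 2 ≤ K') (hl : ℓ + 1 ≤ 2 * ℓ') :
    Cst ℓ (2*K' + 2) := by
  intro p hp
  by_cases hpK : p ≤ 2*K' + 2
  · exact ⟨p, hp, hpK, rfl⟩
  push_neg at hpK
  rcases Nat.even_or_odd p with ⟨q, hq⟩ | ⟨q, hq⟩
  · have hq2 : 2 ≤ q := by omega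
    obtain ⟨q', hq'2, hq'K, hW⟩ := hC q hq2
    refine ⟨2*q', by omega, by omega, ?_⟩
    have key : ∀ s, 1 ≤ s → W (2*s) ℓ = (mu (W s ℓ')).take ℓ := by
      intro s hs
      rw [← W_mu s hs ℓ', W_take]
      omega
    rw [show p = 2*q from by omega, key q (by omega), key q' (by omega), hW]
  · have hq2 : 2 ≤ q := by omega
    obtain ⟨q', hq'2, hq'K, hW⟩ := hC q hq2
    refine ⟨2*q'+1, by omega, by omega, ?_⟩
    have key : ∀ s, W (2*s+1) ℓ = (twistedTM s :: mu (W (s+1) (ℓ'-1))).take ℓ := by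
      intro s
      have : (2:ℕ)*(ℓ'-1)+1 = 2*ℓ'-1 := by omega
      rw [← W_odd s (ℓ'-1), W_take]
      omega
    have hW' := hW
    rw [show ℓ' = (ℓ'-1)+1 from by omega, W_cons, W_cons] at hW'
    simp only [List.cons.injEq] at hW'
    rw [show p = 2*q+1 from by omega, key q, key q', hW'.1, hW'.2]

lemma C3 : Cst 3 20 := Cstep C2 3 (by norm_num) (by norm_num) (by norm_num)
lemma C4 : Cst 4 42 := Cstep C3 4 (by norm_num) (by norm_num) (by norm_num)
lemma C5 : Cst 5 42 := Cstep C3 5 (by norm_num) (by norm_num) (by norm_num)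
lemma C6 : Cst 6 86 := Cstep C4 6 (by norm_num) (by norm_num) (by norm_num)
lemma C7 : Cst 7 86 := Cstep C4 7 (by norm_num) (by norm_num) (by norm_num)
lemma C8 : Cst 8 86 := Cstep C5 8 (by norm_num) (by norm_num) (by norm_num)
lemma C9 : Cst 9 86 := Cstep C5 9 (by norm_num) (by norm_num) (by norm_num)
lemma C10 : Cst 10 174 := Cstep C6 10 (by norm_num) (by norm_num) (by norm_num)
lemma C11 : Cst 11 174 := Cstep C6 11 (by norm_num) (by norm_num) (by norm_num)
lemma C12 : Cst 12 174 := Cstep C7 12 (by norm_num) (by norm_num) (by norm_num)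
lemma C13 : Cst 13 174 := Cstep C7 13 (by norm_num) (by norm_num) (by norm_num)
lemma C14 : Cst 14 174 := Cstep C8 14 (by norm_num) (by norm_num) (by norm_num)
lemma C15 : Cst 15 174 := Cstep C8 15 (by norm_num) (by norm_num) (by norm_num)
lemma C16 : Cst 16 174 := Cstep C9 16 (by norm_num) (by norm_num) (by norm_num)
lemma C17 : Cst 17 174 := Cstep C9 17 (by norm_num) (by norm_num) (by norm_num)
lemma C18 : Cst 18 350 := Cstep C10 18 (by norm_num) (by norm_num) (by norm_num)

lemma facChar {ℓ K : ℕ} (hC : Cst ℓ K) (hK : 2 ≤ K) (v : List (Fin 2)) (hv : v.length = ℓ) :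
    IsFactor v twistedTM ↔ ∃ p, p ≤ K ∧ v = W p ℓ := by
  constructor
  · rintro ⟨i, hi⟩
    rw [hv] at hi
    by_cases h2 : 2 ≤ i
    · obtain ⟨p', h1, h2', h3⟩ := hC i h2
      exact ⟨p', by omega, by rw [hi, h3]⟩
    · exact ⟨i, by omega, hi⟩
  · rintro ⟨p, _, hp⟩
    exact ⟨p, by rw [hv]; exact hp⟩

lemma altpair (p : ℕ) : ∃ i, i < 4 ∧ twistedTM (p+i) = twistedTM (p+i+1) := by
  by_cases hp : 2 ≤ p
  · obtain ⟨p', h1, h2, hW⟩ := C5 p hp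
    have base : ∀ s < 43, 2 ≤ s → ∃ i, i < 4 ∧ (tp (s+i) = tp (s+i+1)) := by decide
    obtain ⟨i, hi, he⟩ := base p' (by omega) h1
    refine ⟨i, hi, ?_⟩
    have e1 := W_congr hW i (by omega)
    have e2 := W_congr hW (i+1) (by omega)
    rw [← Nat.add_assoc, ← Nat.add_assoc] at e2
    rw [← e1, ← e2, tm_tp, tm_tp, he]
  · interval_cases p
    · exact ⟨0, by omega, by rw [tm_tp, tm_tp]; decide⟩
    · exact ⟨2, by omega, by rw [tm_tp, tm_tp]; decide⟩

-- Fin 2 facts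
lemma fin2_res {x a : Fin 2} (h : x ≠ a) : x = a + 1 := by revert h; revert x a; decide
lemma fin2_res' {x a : Fin 2} (h : x ≠ a + 1) : x = a := by revert h; revert x a; decide
lemma fin2_succ_ne (a : Fin 2) : a + 1 ≠ a := by revert a; decide
lemma fin2_succ (x y : Fin 2) (h : x = y + 1) : y = x + 1 := by revert h; revert x y; decide

-- concrete values
lemma tv0 : twistedTM 0 = 0 := by rw [tm_tp]; decide
lemma tv1 : twistedTM 1 = 0 := by rw [tm_tp]; decide
lemma tv2 : twistedTM 2 = 1 := by rw [tm_tp]; decide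
lemma tv3 : twistedTM 3 = 0 := by rw [tm_tp]; decide
lemma tv4 : twistedTM 4 = 0 := by rw [tm_tp]; decide

-- structured window decompositions
lemma take_two (A : List (Fin 2)) (a b : Fin 2) (n : ℕ) (h : A.length + 1 = n) :
    (A ++ [a, b]).take n = A ++ [a] := by
  have : A ++ [a, b] = (A ++ [a]) ++ [b] := by simp
  rw [this]
  apply List.take_left'
  simp [h.symm]

lemma L1 (q r : ℕ) : W (2*q+1) (2*r+3) =
    (twistedTM q :: mu (W (q+1) r)) ++ [twistedTM (q+r+1)+1, twistedTM (q+r+1)] := by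
  have h := W_odd q (r+1)
  rw [show 2*(r+1)+1 = 2*r+3 from by omega] at h
  rw [h, W_snoc, mu_append]
  simp [mu, show q+1+r = q+r+1 from by omega]

lemma L2 (q r : ℕ) : W (2*q+1) (2*r+2) =
    (twistedTM q :: mu (W (q+1) r)) ++ [twistedTM (q+r+1)+1] := by
  have h := L1 q r
  have ht : W (2*q+1) (2*r+2) = (W (2*q+1) (2*r+3)).take (2*r+2) := by
    rw [W_take]; omega
  rw [ht, h, take_two]
  simp [mu_length, W_length]

lemma L3 (q r : ℕ) (hq : 1 ≤ q) : W (2*q) (2*r+2) =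
    mu (W q r) ++ [twistedTM (q+r)+1, twistedTM (q+r)] := by
  have h := W_mu q hq (r+1)
  rw [show 2*(r+1) = 2*r+2 from by omega] at h
  rw [h, W_snoc, mu_append]
  simp [mu]

lemma L4 (q r : ℕ) (hq : 1 ≤ q) : W (2*q) (2*r+1) =
    mu (W q r) ++ [twistedTM (q+r)+1] := by
  have h := L3 q r hq
  have ht : W (2*q) (2*r+1) = (W (2*q) (2*r+2)).take (2*r+1) := by
    rw [W_take]; omega
  rw [ht, h, take_two]
  simp [mu_length, W_length]

-- ## the flipped prefix starting at 0 is never a factor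
lemma A0 (n : ℕ) (hn : 5 ≤ n) (x : Fin 2) (hx : x ≠ twistedTM n) (p : ℕ) :
    W 0 n ++ [x] ≠ W p (n+1) := by
  intro h
  rw [W_snoc] at h
  obtain ⟨h1, h2⟩ := List.append_inj h (by rw [W_length, W_length])
  have hx2 : x = twistedTM (p+n) := by injection h2
  rcases Nat.eq_zero_or_pos p with hp0 | hp1
  · subst hp0; simp at hx2; exact hx hx2
  rcases Nat.even_or_odd p with ⟨s, hs⟩ | ⟨s, hs⟩
  · have e0 := W_congr h1 0 (by omega)
    have e1 := W_congr h1 1 (by omega)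
    simp only [Nat.add_zero, Nat.zero_add] at e0 e1
    rw [tv0] at e0
    rw [tv1] at e1
    have : twistedTM (2*s) = twistedTM (2*s+1) := by
      rw [show 2*s+1 = p+1 from by omega, show 2*s = p from by omega, ← e0, ← e1]
    exact tm_ne s (by omega) this
  · have e3 := W_congr h1 3 (by omega)
    have e4 := W_congr h1 4 (by omega)
    simp only [Nat.zero_add] at e3 e4
    rw [tv3] at e3
    rw [tv4] at e4
    have : twistedTM (2*(s+2)) = twistedTM (2*(s+2)+1) := by
      rw [show 2*(s+2)+1 = p+4 from by omega, show 2*(s+2) = p+3 from by omega, ← e3, ← e4]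
    exact tm_ne (s+2) (by omega) this

-- ## the flipped prefix starting at 1 is never a factor (length ≥ 8)
lemma Qlem : ∀ n, 8 ≤ n → ∀ x : Fin 2, x ≠ twistedTM (n+1) → ∀ p, W 1 n ++ [x] ≠ W p (n+1) := by
  intro n
  induction n using Nat.strong_induction_on with
  | _ n IH =>
    intro hn x hx p h
    have h' := h
    rw [W_snoc] at h'
    obtain ⟨h1, h2⟩ := List.append_inj h' (by rw [W_length, W_length])
    have hx2 : x = twistedTM (p+n) := by injection h2
    by_cases hp0 : p = 0
    · subst hp0
      have e1 := W_congr h1 1 (by omega)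
      rw [show (1:ℕ)+1 = 2 from rfl, show (0:ℕ)+1 = 1 from rfl, tv1, tv2] at e1
      exact absurd e1 (by decide)
    by_cases hp1 : p = 1
    · subst hp1
      rw [show (1:ℕ)+n = n+1 from by omega] at hx2
      exact hx hx2
    -- p ≥ 2
    rcases Nat.even_or_odd p with ⟨s, hs⟩ | ⟨q, hq⟩
    · -- even p : impossible via the 00 at offsets 2,3
      have e2 := W_congr h1 2 (by omega)
      have e3 := W_congr h1 3 (by omega)
      rw [show (1:ℕ)+2 = 3 from rfl, tv3] at e2
      rw [show (1:ℕ)+3 = 4 from rfl, tv4] at e3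
      have hps : 2*(s+1) = p+2 := by omega
      have hps2 : 2*(s+1)+1 = p+3 := by omega
      rw [← hps] at e2
      rw [← hps2] at e3
      exact tm_ne (s+1) (by omega) (e2.symm.trans e3)
    · -- odd p = 2q+1, q ≥ 1
      have hq1 : 1 ≤ q := by omega
      by_cases hbig : n ≤ 17
      · -- finite base check
        have hfac : ∃ p', p' ≤ 350 ∧ W 1 n ++ [x] = W p' (n+1) := by
          interval_cases n
          · exact (facChar C9 (by norm_num) _ (by simp [W_length])).mp ⟨p, by
              rw [List.length_append, W_length]; exact h⟩ |>.imp fun p' ⟨a, b⟩ => ⟨by omega, b⟩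
          · exact (facChar C10 (by norm_num) _ (by simp [W_length])).mp ⟨p, by
              rw [List.length_append, W_length]; exact h⟩ |>.imp fun p' ⟨a, b⟩ => ⟨by omega, b⟩
          · exact (facChar C11 (by norm_num) _ (by simp [W_length])).mp ⟨p, by
              rw [List.length_append, W_length]; exact h⟩ |>.imp fun p' ⟨a, b⟩ => ⟨by omega, b⟩
          · exact (facChar C12 (by norm_num) _ (by simp [W_length])).mp ⟨p, by
              rw [List.length_append, W_length]; exact h⟩ |>.imp fun p' ⟨a, b⟩ => ⟨by omega, b⟩
          · exact (facChar C13 (by norm_num) _ (by simp [W_length])).mp ⟨p, by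
              rw [List.length_append, W_length]; exact h⟩ |>.imp fun p' ⟨a, b⟩ => ⟨by omega, b⟩
          · exact (facChar C14 (by norm_num) _ (by simp [W_length])).mp ⟨p, by
              rw [List.length_append, W_length]; exact h⟩ |>.imp fun p' ⟨a, b⟩ => ⟨by omega, b⟩
          · exact (facChar C15 (by norm_num) _ (by simp [W_length])).mp ⟨p, by
              rw [List.length_append, W_length]; exact h⟩ |>.imp fun p' ⟨a, b⟩ => ⟨by omega, b⟩
          · exact (facChar C16 (by norm_num) _ (by simp [W_length])).mp ⟨p, by
              rw [List.length_append, W_length]; exact h⟩ |>.imp fun p' ⟨a, b⟩ => ⟨by omega, b⟩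
          · exact (facChar C17 (by norm_num) _ (by simp [W_length])).mp ⟨p, by
              rw [List.length_append, W_length]; exact h⟩ |>.imp fun p' ⟨a, b⟩ => ⟨by omega, b⟩
          · exact (facChar C18 (by norm_num) _ (by simp [W_length])).mp ⟨p, by
              rw [List.length_append, W_length]; exact h⟩ |>.imp fun p' ⟨a, b⟩ => ⟨by omega, b⟩
        obtain ⟨p', hp', he⟩ := hfac
        have hxv : x = twistedTM (n+1) + 1 := fin2_res hx
        rw [hxv, tm_tp (n+1), Wc_eq, Wc_eq] at he
        revert he
        interval_cases n
        · exact fun he => (by decide : ∀ p'' < 351,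
            ¬(Wc 1 8 ++ [(if tp 9 then (1:Fin 2) else 0) + 1] = Wc p'' 9)) p' (by omega) he
        · exact fun he => (by decide : ∀ p'' < 351,
            ¬(Wc 1 9 ++ [(if tp 10 then (1:Fin 2) else 0) + 1] = Wc p'' 10)) p' (by omega) he
        · exact fun he => (by decide : ∀ p'' < 351,
            ¬(Wc 1 10 ++ [(if tp 11 then (1:Fin 2) else 0) + 1] = Wc p'' 11)) p' (by omega) he
        · exact fun he => (by decide : ∀ p'' < 351,
            ¬(Wc 1 11 ++ [(if tp 12 then (1:Fin 2) else 0) + 1] = Wc p'' 12)) p' (by omega) he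
        · exact fun he => (by decide : ∀ p'' < 351,
            ¬(Wc 1 12 ++ [(if tp 13 then (1:Fin 2) else 0) + 1] = Wc p'' 13)) p' (by omega) he
        · exact fun he => (by decide : ∀ p'' < 351,
            ¬(Wc 1 13 ++ [(if tp 14 then (1:Fin 2) else 0) + 1] = Wc p'' 14)) p' (by omega) he
        · exact fun he => (by decide : ∀ p'' < 351,
            ¬(Wc 1 14 ++ [(if tp 15 then (1:Fin 2) else 0) + 1] = Wc p'' 15)) p' (by omega) he
        · exact fun he => (by decide : ∀ p'' < 351,
            ¬(Wc 1 15 ++ [(if tp 16 then (1:Fin 2) else 0) + 1] = Wc p'' 16)) p' (by omega) he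
        · exact fun he => (by decide : ∀ p'' < 351,
            ¬(Wc 1 16 ++ [(if tp 17 then (1:Fin 2) else 0) + 1] = Wc p'' 17)) p' (by omega) he
        · exact fun he => (by decide : ∀ p'' < 351,
            ¬(Wc 1 17 ++ [(if tp 18 then (1:Fin 2) else 0) + 1] = Wc p'' 18)) p' (by omega) he

      · push_neg at hbig  -- 18 ≤ n
        rcases Nat.even_or_odd n with ⟨r, hr⟩ | ⟨r, hr⟩
        · -- n = 2r, r ≥ 9 ; write r = r'+1
          obtain ⟨r', hr'⟩ : ∃ r', r = r' + 1 := ⟨r - 1, by omega⟩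
          -- h : W 1 n ++ [x] = W p (n+1)
          rw [show p = 2*q+1 from by omega, show n+1 = 2*r'+3 from by omega, L1] at h
          rw [show n = (2*r'+1)+1 from by omega, W_cons] at h
          rw [show (1:ℕ)+1 = 2*1 from rfl, L4 1 r' (by norm_num)] at h
          simp only [List.cons_append, List.cons.injEq] at h
          obtain ⟨-, htail⟩ := h
          rw [List.append_assoc] at htail
          obtain ⟨hmu, hpair⟩ := List.append_inj htail (by rw [mu_length, mu_length, W_length, W_length])
          have hWeq : W 1 r' = W (q+1) r' := mu_inj hmu
          have hxval : x = twistedTM (q+r'+1) := by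
            rw [List.singleton_append] at hpair
            simp only [List.cons.injEq] at hpair
            exact hpair.2.1
          -- the smaller flipped prefix
          have hsmall : W 1 r' ++ [x] = W (q+1) (r'+1) := by
            rw [W_snoc, hWeq, hxval, show q+1+r' = q+r'+1 from by omega]
          have hxne : x ≠ twistedTM (r'+1) := by
            intro hcon
            apply hx
            rw [show n+1 = 2*r+1 from by omega, tm_odd r, hr']
            exact hcon
          exact IH r' (by omega) (by omega) x hxne (q+1) hsmall
        · -- n = 2r+1, r ≥ 9
          rw [show p = 2*q+1 from by omega, show n+1 = 2*r+2 from by omega, L2] at h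
          rw [show n = 2*r+1 from by omega, show (2:ℕ)*r+1 = (2*r)+1 from rfl, W_cons] at h
          rw [show (1:ℕ)+1 = 2*1 from rfl, W_mu 1 (by norm_num) r] at h
          simp only [List.cons_append, List.cons.injEq] at h
          obtain ⟨-, htail⟩ := h
          obtain ⟨hmu, hone⟩ := List.append_inj htail (by rw [mu_length, mu_length, W_length, W_length])
          have hWeq : W 1 r = W (q+1) r := mu_inj hmu
          have hxval : x = twistedTM (q+r+1) + 1 := by
            simp only [List.cons.injEq] at hone
            exact hone.1
          set y := twistedTM (q+r+1) with hy
          have hyx : y = x + 1 := fin2_succ x y hxval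
          have hsmall : W 1 r ++ [y] = W (q+1) (r+1) := by
            rw [W_snoc, hWeq, show q+1+r = q+r+1 from by omega]
          have hxr : x = twistedTM (r+1) := by
            apply fin2_res'
            intro hcon
            apply hx
            rw [show n+1 = 2*(r+1) from by omega, tm_even (r+1) (by omega)]
            exact hcon
          have hyne : y ≠ twistedTM (r+1) := by
            rw [hyx, hxr]
            exact fin2_succ_ne _
          exact IH r (by omega) (by omega) y hyne (q+1) hsmall

def RS (n : ℕ) : Set (List (Fin 2)) :=
  {v | v.length = n ∧ IsFactor (v ++ [0]) twistedTM ∧ IsFactor (v ++ [1]) twistedTM}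

def Fac1 (w : List (Fin 2)) : Prop := ∃ p, 1 ≤ p ∧ w = W p w.length

def RS1 (m : ℕ) : Set (List (Fin 2)) :=
  {z | z.length = m ∧ Fac1 (z ++ [0]) ∧ Fac1 (z ++ [1])}

lemma numSpecial_RS (n : ℕ) : numSpecial twistedTM n = (RS n).ncard := rfl

lemma fin2_c0 {a : Fin 2} (h : (0:Fin 2) = a + 1) : a = 1 := by revert h; revert a; decide
lemma fin2_c1 {a : Fin 2} (h : (1:Fin 2) = a + 1) : a = 0 := by revert h; revert a; decide

lemma mu_snoc (z : List (Fin 2)) (c : Fin 2) : mu (z ++ [c]) = mu z ++ [c+1, c] := by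
  rw [mu_append]; rfl

lemma nu_W (q m : ℕ) : nu (W q (m+1)) = twistedTM q :: mu (W (q+1) m) := by
  rw [W_cons]; rfl

-- every witness of a special extension sits at position ≥ 2
lemma wit2 {N : ℕ} (hN : 8 ≤ N) {v : List (Fin 2)} (hlen : v.length = N)
    {c : Fin 2} {p : ℕ} (hc : v ++ [c] = W p (N+1))
    (hother : IsFactor (v ++ [c+1]) twistedTM) : 2 ≤ p := by
  by_contra hlt
  push_neg at hlt
  obtain ⟨i, hi⟩ := hother
  have hilen : (v ++ [c+1]).length = N+1 := by simp [hlen]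
  rw [hilen] at hi
  rw [W_snoc] at hc
  obtain ⟨h1, h2⟩ := List.append_inj hc (by rw [hlen, W_length])
  have hcv : c = twistedTM (p+N) := by injection h2
  interval_cases p
  · simp only [Nat.zero_add] at hcv
    refine A0 N (by omega) (c+1) ?_ i ?_
    · rw [← hcv]; exact fin2_succ_ne c
    · rw [← h1]; exact hi
  · refine Qlem N (by omega) (c+1) ?_ i ?_
    · rw [show 1+N = N+1 from by omega] at hcv
      rw [← hcv]; exact fin2_succ_ne c
    · rw [← h1]; exact hi

lemma parity_odd {p i : ℕ} (hp : 2 ≤ p)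
    (hpr : twistedTM (p+i) = twistedTM (p+i+1)) : (p+i) % 2 = 1 := by
  by_contra hpar
  obtain ⟨s, hs⟩ : ∃ s, p + i = 2*s := ⟨(p+i)/2, by omega⟩
  rw [hs, show 2*s+1 = 2*s+1 from rfl] at hpr
  exact tm_ne s (by omega) hpr

lemma evenCase (m : ℕ) (hm : 5 ≤ m) : RS (2*m) = mu '' RS1 m := by
  ext v
  constructor
  · rintro ⟨hlen, ⟨p0, hp0⟩, ⟨p1, hp1⟩⟩
    rw [show (v ++ [(0:Fin 2)]).length = 2*m+1 from by simp [hlen]] at hp0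
    rw [show (v ++ [(1:Fin 2)]).length = 2*m+1 from by simp [hlen]] at hp1
    have hp0' : v ++ [(0:Fin 2)] = W p0 (2*m+1) := hp0
    have hp1' : v ++ [(1:Fin 2)] = W p1 (2*m+1) := hp1
    have hw0 : 2 ≤ p0 := wit2 (by omega) hlen hp0'
      ⟨p1, by rw [show (0:Fin 2)+1 = 1 from rfl,
        show (v ++ [(1:Fin 2)]).length = 2*m+1 from by simp [hlen]]; exact hp1⟩
    have hw1 : 2 ≤ p1 := wit2 (by omega) hlen hp1'
      ⟨p0, by rw [show (1:Fin 2)+1 = 0 from rfl,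
        show (v ++ [(0:Fin 2)]).length = 2*m+1 from by simp [hlen]]; exact hp0⟩
    clear hp0 hp1
    have hv0 : v = W p0 (2*m) := by
      rw [← W_take p0 (2*m) (2*m+1) (by omega), ← hp0', List.take_left' hlen]
    have hv1 : v = W p1 (2*m) := by
      rw [← W_take p1 (2*m) (2*m+1) (by omega), ← hp1', List.take_left' hlen]
    obtain ⟨i, hi4, hpr⟩ := altpair p0
    have hpr1 : twistedTM (p1+i) = twistedTM (p1+i+1) := by
      have hW : W p1 (2*m) = W p0 (2*m) := by rw [← hv0, ← hv1]
      have e1 := W_congr hW i (by omega)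
      have e2 := W_congr hW (i+1) (by omega)
      rw [← Nat.add_assoc, ← Nat.add_assoc] at e2
      rw [e1, e2]; exact hpr
    have par0 := parity_odd hw0 hpr
    have par1 := parity_odd hw1 hpr1
    rcases Nat.even_or_odd p0 with hev | hod
    · -- both even
      obtain ⟨q0, hq0⟩ : ∃ q0, p0 = 2*q0 := ⟨p0/2, by rcases hev with ⟨t, ht⟩; omega⟩
      obtain ⟨q1, hq1⟩ : ∃ q1, p1 = 2*q1 := ⟨p1/2, by omega⟩
      rw [hq0, L4 q0 m (by omega)] at hp0'
      rw [hq1, L4 q1 m (by omega)] at hp1'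
      obtain ⟨hva, hca⟩ := List.append_inj hp0' (by rw [hlen, mu_length, W_length])
      obtain ⟨hvb, hcb⟩ := List.append_inj hp1' (by rw [hlen, mu_length, W_length])
      have ha : twistedTM (q0+m) = 1 := fin2_c0 (by injection hca)
      have hb : twistedTM (q1+m) = 0 := fin2_c1 (by injection hcb)
      refine ⟨W q0 m, ⟨W_length q0 m, ?_, ?_⟩, hva.symm⟩
      · have hzz : W q0 m = W q1 m := mu_inj (by rw [← hva, ← hvb])
        refine ⟨q1, by omega, ?_⟩
        rw [show (W q0 m ++ [(0:Fin 2)]).length = m+1 from by simp [W_length], hzz, ← hb, ← W_snoc]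
      · refine ⟨q0, by omega, ?_⟩
        rw [show (W q0 m ++ [(1:Fin 2)]).length = m+1 from by simp [W_length], ← ha, ← W_snoc]
    · -- both odd : contradiction
      obtain ⟨q0, hq0⟩ : ∃ q0, p0 = 2*q0+1 := ⟨p0/2, by rcases hod with ⟨t, ht⟩; omega⟩
      obtain ⟨q1, hq1⟩ : ∃ q1, p1 = 2*q1+1 := ⟨p1/2, by omega⟩
      obtain ⟨m', hm'⟩ : ∃ m', m = m'+1 := ⟨m-1, by omega⟩
      rw [hq0, show 2*m+1 = 2*m'+3 from by omega, L1] at hp0'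
      rw [hq1, show 2*m+1 = 2*m'+3 from by omega, L1] at hp1'
      rw [show ((twistedTM q0 :: mu (W (q0+1) m')) ++
            [twistedTM (q0+m'+1)+1, twistedTM (q0+m'+1)]) =
          ((twistedTM q0 :: mu (W (q0+1) m')) ++ [twistedTM (q0+m'+1)+1]) ++
            [twistedTM (q0+m'+1)] from by simp] at hp0'
      rw [show ((twistedTM q1 :: mu (W (q1+1) m')) ++
            [twistedTM (q1+m'+1)+1, twistedTM (q1+m'+1)]) =
          ((twistedTM q1 :: mu (W (q1+1) m')) ++ [twistedTM (q1+m'+1)+1]) ++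
            [twistedTM (q1+m'+1)] from by simp] at hp1'
      obtain ⟨hva, hca⟩ := List.append_inj hp0'
        (by simp [hlen, mu_length, W_length]; omega)
      obtain ⟨hvb, hcb⟩ := List.append_inj hp1'
        (by simp [hlen, mu_length, W_length]; omega)
      have ha : (0:Fin 2) = twistedTM (q0+m'+1) := by injection hca
      have hb : (1:Fin 2) = twistedTM (q1+m'+1) := by injection hcb
      have hlast := List.append_inj (hva.symm.trans hvb)
        (by simp [mu_length, W_length])
      have hcontra : twistedTM (q0+m'+1)+1 = twistedTM (q1+m'+1)+1 := by
        have h9 := hlast.2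
        injection h9
      rw [← ha, ← hb] at hcontra
      exact absurd hcontra (by decide)
  · rintro ⟨z, ⟨hzlen, ⟨q0, hq01, hz0⟩, ⟨q1, hq11, hz1⟩⟩, rfl⟩
    rw [show (z ++ [(0:Fin 2)]).length = m+1 from by simp [hzlen]] at hz0
    rw [show (z ++ [(1:Fin 2)]).length = m+1 from by simp [hzlen]] at hz1
    refine ⟨by rw [mu_length, hzlen], ?_, ?_⟩
    · refine ⟨2*q1, ?_⟩
      rw [show (mu z ++ [(0:Fin 2)]).length = 2*m+1 from by simp [mu_length, hzlen]]
      have h2q : W (2*q1) (2*(m+1)) = mu (W q1 (m+1)) := W_mu q1 hq11 (m+1)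
      rw [← hz1, mu_snoc, show (1:Fin 2)+1 = 0 from rfl] at h2q
      have t1 : W (2*q1) (2*m+1) = (W (2*q1) (2*(m+1))).take (2*m+1) :=
        (W_take _ _ _ (by omega)).symm
      rw [h2q, take_two _ _ _ _ (by rw [mu_length, hzlen])] at t1
      exact t1.symm
    · refine ⟨2*q0, ?_⟩
      rw [show (mu z ++ [(1:Fin 2)]).length = 2*m+1 from by simp [mu_length, hzlen]]
      have h2q : W (2*q0) (2*(m+1)) = mu (W q0 (m+1)) := W_mu q0 hq01 (m+1)
      rw [← hz0, mu_snoc, show (0:Fin 2)+1 = 1 from rfl] at h2q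
      have t1 : W (2*q0) (2*m+1) = (W (2*q0) (2*(m+1))).take (2*m+1) :=
        (W_take _ _ _ (by omega)).symm
      rw [h2q, take_two _ _ _ _ (by rw [mu_length, hzlen])] at t1
      exact t1.symm

lemma oddCase (m : ℕ) (hm : 4 ≤ m) : RS (2*m+1) = nu '' RS1 (m+1) := by
  ext v
  constructor
  · rintro ⟨hlen, ⟨p0, hp0⟩, ⟨p1, hp1⟩⟩
    rw [show (v ++ [(0:Fin 2)]).length = 2*m+2 from by simp [hlen]] at hp0
    rw [show (v ++ [(1:Fin 2)]).length = 2*m+2 from by simp [hlen]] at hp1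
    have hp0' : v ++ [(0:Fin 2)] = W p0 (2*m+1+1) := hp0
    have hp1' : v ++ [(1:Fin 2)] = W p1 (2*m+1+1) := hp1
    have hw0 : 2 ≤ p0 := wit2 (by omega) hlen hp0'
      ⟨p1, by rw [show (0:Fin 2)+1 = 1 from rfl,
        show (v ++ [(1:Fin 2)]).length = 2*m+1+1 from by simp [hlen]]; exact hp1⟩
    have hw1 : 2 ≤ p1 := wit2 (by omega) hlen hp1'
      ⟨p0, by rw [show (1:Fin 2)+1 = 0 from rfl,
        show (v ++ [(0:Fin 2)]).length = 2*m+1+1 from by simp [hlen]]; exact hp0⟩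
    clear hp0 hp1
    have hv0 : v = W p0 (2*m+1) := by
      rw [← W_take p0 (2*m+1) (2*m+1+1) (by omega), ← hp0', List.take_left' hlen]
    have hv1 : v = W p1 (2*m+1) := by
      rw [← W_take p1 (2*m+1) (2*m+1+1) (by omega), ← hp1', List.take_left' hlen]
    obtain ⟨i, hi4, hpr⟩ := altpair p0
    have hpr1 : twistedTM (p1+i) = twistedTM (p1+i+1) := by
      have hW : W p1 (2*m+1) = W p0 (2*m+1) := by rw [← hv0, ← hv1]
      have e1 := W_congr hW i (by omega)
      have e2 := W_congr hW (i+1) (by omega)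
      rw [← Nat.add_assoc, ← Nat.add_assoc] at e2
      rw [e1, e2]; exact hpr
    have par0 := parity_odd hw0 hpr
    have par1 := parity_odd hw1 hpr1
    rcases Nat.even_or_odd p0 with hev | hod
    · -- both even : contradiction
      obtain ⟨q0, hq0⟩ : ∃ q0, p0 = 2*q0 := ⟨p0/2, by rcases hev with ⟨t, ht⟩; omega⟩
      obtain ⟨q1, hq1⟩ : ∃ q1, p1 = 2*q1 := ⟨p1/2, by omega⟩
      rw [hq0, show 2*m+1+1 = 2*m+2 from rfl, L3 q0 m (by omega)] at hp0'
      rw [hq1, show 2*m+1+1 = 2*m+2 from rfl, L3 q1 m (by omega)] at hp1'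
      rw [show (mu (W q0 m) ++ [twistedTM (q0+m)+1, twistedTM (q0+m)]) =
          ((mu (W q0 m) ++ [twistedTM (q0+m)+1]) ++ [twistedTM (q0+m)]) from by simp] at hp0'
      rw [show (mu (W q1 m) ++ [twistedTM (q1+m)+1, twistedTM (q1+m)]) =
          ((mu (W q1 m) ++ [twistedTM (q1+m)+1]) ++ [twistedTM (q1+m)]) from by simp] at hp1'
      obtain ⟨hva, hca⟩ := List.append_inj hp0'
        (by simp [hlen, mu_length, W_length])
      obtain ⟨hvb, hcb⟩ := List.append_inj hp1'
        (by simp [hlen, mu_length, W_length])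
      have ha : (0:Fin 2) = twistedTM (q0+m) := by injection hca
      have hb : (1:Fin 2) = twistedTM (q1+m) := by injection hcb
      have hlast := List.append_inj (hva.symm.trans hvb)
        (by simp [mu_length, W_length])
      have hcontra : twistedTM (q0+m)+1 = twistedTM (q1+m)+1 := by
        have h9 := hlast.2
        injection h9
      rw [← ha, ← hb] at hcontra
      exact absurd hcontra (by decide)
    · -- both odd
      obtain ⟨q0, hq0⟩ : ∃ q0, p0 = 2*q0+1 := ⟨p0/2, by rcases hod with ⟨t, ht⟩; omega⟩
      obtain ⟨q1, hq1⟩ : ∃ q1, p1 = 2*q1+1 := ⟨p1/2, by omega⟩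
      rw [hq0, show 2*m+1+1 = 2*m+2 from rfl, L2 q0 m] at hp0'
      rw [hq1, show 2*m+1+1 = 2*m+2 from rfl, L2 q1 m] at hp1'
      obtain ⟨hva, hca⟩ := List.append_inj hp0'
        (by simp [hlen, mu_length, W_length])
      obtain ⟨hvb, hcb⟩ := List.append_inj hp1'
        (by simp [hlen, mu_length, W_length])
      have ha : twistedTM (q0+m+1) = 1 := fin2_c0 (by injection hca)
      have hb : twistedTM (q1+m+1) = 0 := fin2_c1 (by injection hcb)
      refine ⟨W q0 (m+1), ⟨W_length q0 (m+1), ?_, ?_⟩, ?_⟩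
      · -- Fac1 (W q0 (m+1) ++ [0])
        have hzz : W q0 (m+1) = W q1 (m+1) := by
          have : nu (W q0 (m+1)) = nu (W q1 (m+1)) := by
            rw [nu_W, nu_W, ← hva, ← hvb]
          exact nu_inj this
        refine ⟨q1, by omega, ?_⟩
        rw [show (W q0 (m+1) ++ [(0:Fin 2)]).length = m+2 from by simp [W_length],
          hzz, ← hb, show q1+m+1 = q1+(m+1) from by omega, ← W_snoc]
      · refine ⟨q0, by omega, ?_⟩
        rw [show (W q0 (m+1) ++ [(1:Fin 2)]).length = m+2 from by simp [W_length],
          ← ha, show q0+m+1 = q0+(m+1) from by omega, ← W_snoc]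
      · rw [nu_W, ← hva]
  · rintro ⟨z, ⟨hzlen, ⟨q0, hq01, hz0⟩, ⟨q1, hq11, hz1⟩⟩, rfl⟩
    rw [show (z ++ [(0:Fin 2)]).length = m+2 from by simp [hzlen]] at hz0
    rw [show (z ++ [(1:Fin 2)]).length = m+2 from by simp [hzlen]] at hz1
    have hz : z = W q0 (m+1) := by
      rw [← W_take q0 (m+1) (m+2) (by omega), ← hz0, List.take_left' hzlen]
    have hz' : z = W q1 (m+1) := by
      rw [← W_take q1 (m+1) (m+2) (by omega), ← hz1, List.take_left' hzlen]
    have hlen : (nu z).length = 2*m+1 := by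
      rw [hz, nu_W]
      simp [mu_length, W_length]
    have hc0 : (0:Fin 2) = twistedTM (q0+m+1) := by
      have h9 : W q0 (m+2) = W q0 (m+1) ++ [twistedTM (q0+(m+1))] := W_snoc q0 (m+1)
      rw [← hz0, ← hz] at h9
      have h10 := List.append_cancel_left h9
      rw [show q0+m+1 = q0+(m+1) from by omega]
      injection h10
    have hc1 : (1:Fin 2) = twistedTM (q1+m+1) := by
      have h9 : W q1 (m+2) = W q1 (m+1) ++ [twistedTM (q1+(m+1))] := W_snoc q1 (m+1)
      rw [← hz1, ← hz'] at h9
      have h10 := List.append_cancel_left h9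
      rw [show q1+m+1 = q1+(m+1) from by omega]
      injection h10
    refine ⟨hlen, ?_, ?_⟩
    · -- nu z ++ [0] occurs at 2*q1+1
      refine ⟨2*q1+1, ?_⟩
      rw [show (nu z ++ [(0:Fin 2)]).length = 2*m+2 from by rw [List.length_append, hlen]; rfl]
      have hL : W (2*q1+1) (2*m+2) = (twistedTM q1 :: mu (W (q1+1) m)) ++ [twistedTM (q1+m+1)+1] := L2 q1 m
      rw [← nu_W, ← hz', ← hc1, show (1:Fin 2)+1 = 0 from rfl] at hL
      exact hL.symm
    · refine ⟨2*q0+1, ?_⟩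
      rw [show (nu z ++ [(1:Fin 2)]).length = 2*m+2 from by rw [List.length_append, hlen]; rfl]
      have hL : W (2*q0+1) (2*m+2) = (twistedTM q0 :: mu (W (q0+1) m)) ++ [twistedTM (q0+m+1)+1] := L2 q0 m
      rw [← nu_W, ← hz, ← hc0, show (0:Fin 2)+1 = 1 from rfl] at hL
      exact hL.symm

lemma toFac1 {m : ℕ} (hm : 5 ≤ m) {v : List (Fin 2)} (hl : v.length = m) {c : Fin 2}
    (hc : IsFactor (v ++ [c]) twistedTM) (hc1 : IsFactor (v ++ [c+1]) twistedTM) :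
    Fac1 (v ++ [c]) := by
  obtain ⟨p, hp⟩ := hc
  rw [show (v ++ [c]).length = m+1 from by simp [hl]] at hp
  rcases Nat.eq_zero_or_pos p with hp0 | hp1
  · exfalso
    subst hp0
    have hp2 : v ++ [c] = W 0 (m+1) := hp
    have hp' : v ++ [c] = W 0 m ++ [twistedTM (0+m)] := by rw [hp2]; exact W_snoc 0 m
    obtain ⟨h1, h2⟩ := List.append_inj hp' (by rw [hl, W_length])
    have hcv : c = twistedTM m := by
      have : c = twistedTM (0+m) := by injection h2
      rwa [Nat.zero_add] at this
    obtain ⟨i, hi⟩ := hc1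
    rw [show (v ++ [c+1]).length = m+1 from by simp [hl]] at hi
    refine A0 m hm (c+1) ?_ i ?_
    · rw [← hcv]; exact fin2_succ_ne c
    · rw [← h1]; exact hi
  · exact ⟨p, hp1, by rw [show (v ++ [c]).length = m+1 from by simp [hl]]; exact hp⟩

lemma RS1_eq (m : ℕ) (hm : 5 ≤ m) : RS1 m = RS m := by
  ext z
  constructor
  · rintro ⟨hl, ⟨q0, _, h0⟩, ⟨q1, _, h1⟩⟩
    exact ⟨hl, ⟨q0, h0⟩, ⟨q1, h1⟩⟩
  · rintro ⟨hl, h0, h1⟩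
    refine ⟨hl, ?_, ?_⟩
    · exact toFac1 hm hl h0 (by rw [show (0:Fin 2)+1 = 1 from rfl]; exact h1)
    · exact toFac1 hm hl h1 (by rw [show (1:Fin 2)+1 = 0 from rfl]; exact h0)

lemma halve (n : ℕ) (hn : 9 ≤ n) :
    numSpecial twistedTM n = numSpecial twistedTM ((n+1)/2) := by
  rw [numSpecial_RS, numSpecial_RS]
  rcases Nat.even_or_odd n with ⟨m, hmev⟩ | ⟨m, hmod⟩
  · have hm : 5 ≤ m := by omega
    rw [show n = 2*m from by omega, show ((2*m+1)/2) = m from by omega,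
      evenCase m hm, RS1_eq m hm, Set.ncard_image_of_injective _ mu_inj]
  · have hm : 4 ≤ m := by omega
    rw [show n = 2*m+1 from by omega, show ((2*m+1+1)/2) = m+1 from by omega,
      oddCase m hm, RS1_eq (m+1) (by omega), Set.ncard_image_of_injective _ nu_inj]

-- ## base cases via finite enumeration
def goodF (n K : ℕ) (v : List (Fin 2)) : Bool :=
  ((List.range (K+1)).any (fun p => v ++ [0] == Wc p (n+1))) &&
  ((List.range (K+1)).any (fun p => v ++ [1] == Wc p (n+1)))

def SpecF (n K : ℕ) : Finset (List (Fin 2)) :=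
  ((Finset.range (K+1)).image (fun p => Wc p n)).filter (fun v => goodF n K v)

lemma Wc_length (p ℓ : ℕ) : (Wc p ℓ).length = ℓ := by simp [Wc]

lemma goodF_iff (n K : ℕ) (v : List (Fin 2)) : goodF n K v = true ↔
    (∃ p ≤ K, v ++ [0] = Wc p (n+1)) ∧ (∃ p ≤ K, v ++ [1] = Wc p (n+1)) := by
  simp only [goodF, Bool.and_eq_true, List.any_eq_true, List.mem_range, beq_iff_eq]
  constructor
  · rintro ⟨⟨p0, h0, e0⟩, ⟨p1, h1, e1⟩⟩
    exact ⟨⟨p0, by omega, e0⟩, ⟨p1, by omega, e1⟩⟩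
  · rintro ⟨⟨p0, h0, e0⟩, ⟨p1, h1, e1⟩⟩
    exact ⟨⟨p0, by omega, e0⟩, ⟨p1, by omega, e1⟩⟩

lemma RS_fin (n K : ℕ) (hC : Cst (n+1) K) (hK : 2 ≤ K) : RS n = ↑(SpecF n K) := by
  ext v
  simp only [SpecF, Finset.coe_filter, Set.mem_setOf_eq, Finset.mem_image, Finset.mem_range,
    goodF_iff]
  constructor
  · rintro ⟨hlen, h0, h1⟩
    obtain ⟨p0, hp0K, e0⟩ := (facChar hC hK (v ++ [0]) (by simp [hlen])).mp h0
    obtain ⟨p1, hp1K, e1⟩ := (facChar hC hK (v ++ [1]) (by simp [hlen])).mp h1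
    refine ⟨⟨p0, by omega, ?_⟩, ⟨p0, hp0K, by rw [← Wc_eq]; exact e0⟩,
      ⟨p1, hp1K, by rw [← Wc_eq]; exact e1⟩⟩
    · rw [← Wc_eq]
      rw [← W_take p0 n (n+1) (by omega), ← e0, List.take_left' hlen]
  · rintro ⟨⟨p, hpK, hv⟩, ⟨p0, hp0K, e0⟩, ⟨p1, hp1K, e1⟩⟩
    have hlen : v.length = n := by rw [← hv, Wc_length]
    refine ⟨hlen, ⟨p0, ?_⟩, ⟨p1, ?_⟩⟩
    · rw [show (v ++ [(0:Fin 2)]).length = n+1 from by simp [hlen]]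
      exact e0.trans (Wc_eq p0 (n+1)).symm
    · rw [show (v ++ [(1:Fin 2)]).length = n+1 from by simp [hlen]]
      exact e1.trans (Wc_eq p1 (n+1)).symm
lemma base1 : numSpecial twistedTM 1 = 2 := by
  rw [numSpecial_RS, RS_fin 1 9 C2 (by norm_num), Set.ncard_coe_finset]
  decide
lemma base2 : numSpecial twistedTM 2 = 2 := by
  rw [numSpecial_RS, RS_fin 2 20 C3 (by norm_num), Set.ncard_coe_finset]
  decide
lemma base3 : numSpecial twistedTM 3 = 4 := by
  rw [numSpecial_RS, RS_fin 3 42 C4 (by norm_num), Set.ncard_coe_finset]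
  decide
lemma base4 : numSpecial twistedTM 4 = 3 := by
  rw [numSpecial_RS, RS_fin 4 42 C5 (by norm_num), Set.ncard_coe_finset]
  decide
lemma base5 : numSpecial twistedTM 5 = 4 := by
  rw [numSpecial_RS, RS_fin 5 86 C6 (by norm_num), Set.ncard_coe_finset]
  decide
lemma base6 : numSpecial twistedTM 6 = 4 := by
  rw [numSpecial_RS, RS_fin 6 86 C7 (by norm_num), Set.ncard_coe_finset]
  decide
lemma base7 : numSpecial twistedTM 7 = 3 := by
  rw [numSpecial_RS, RS_fin 7 86 C8 (by norm_num), Set.ncard_coe_finset]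
  decide
lemma base8 : numSpecial twistedTM 8 = 2 := by
  rw [numSpecial_RS, RS_fin 8 86 C9 (by norm_num), Set.ncard_coe_finset]
  decide

-- ## arithmetic of the dyadic zones
lemma zone4_half (n : ℕ) (hn : 9 ≤ n) :
    (∃ k, 2^(k+1) < n ∧ n ≤ 3*2^k) ↔ (∃ k, 2^(k+1) < (n+1)/2 ∧ (n+1)/2 ≤ 3*2^k) := by
  constructor
  · rintro ⟨k, h1, h2⟩
    have hk2 : 2 ≤ k := by
      by_contra hk
      push_neg at hk
      interval_cases k <;> norm_num at h1 h2 <;> omega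
    obtain ⟨j, rfl⟩ : ∃ j, k = j+2 := ⟨k-2, by omega⟩
    refine ⟨j+1, ?_, ?_⟩
    · have e1 : (2:ℕ)^(j+2+1) = 2*2^(j+1+1) := by ring
      omega
    · have e1 : (3:ℕ)*2^(j+2) = 2*(3*2^(j+1)) := by ring
      omega
  · rintro ⟨k, h1, h2⟩
    refine ⟨k+1, ?_, ?_⟩
    · have e1 : (2:ℕ)^(k+1+1) = 2*2^(k+1) := by ring
      omega
    · have e1 : (3:ℕ)*2^(k+1) = 2*(3*2^k) := by ring
      omega

lemma zone3_half (n : ℕ) (hn : 9 ≤ n) :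
    (∃ k, 3*2^(k+1) < n ∧ n ≤ 7*2^k) ↔ (∃ k, 3*2^(k+1) < (n+1)/2 ∧ (n+1)/2 ≤ 7*2^k) := by
  constructor
  · rintro ⟨k, h1, h2⟩
    have hk1 : 1 ≤ k := by
      by_contra hk
      push_neg at hk
      interval_cases k <;> norm_num at h1 h2 <;> omega
    obtain ⟨j, rfl⟩ : ∃ j, k = j+1 := ⟨k-1, by omega⟩
    refine ⟨j, ?_, ?_⟩
    · have e1 : (3:ℕ)*2^(j+1+1) = 2*(3*2^(j+1)) := by ring
      omega
    · have e1 : (7:ℕ)*2^(j+1) = 2*(7*2^j) := by ring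
      omega
  · rintro ⟨k, h1, h2⟩
    refine ⟨k+1, ?_, ?_⟩
    · have e1 : (3:ℕ)*2^(k+1+1) = 2*(3*2^(k+1)) := by ring
      omega
    · have e1 : (7:ℕ)*2^(k+1) = 2*(7*2^k) := by ring
      omega

open scoped Classical in
theorem twistedTM_special_count' (n : ℕ) (hn : 0 < n) :
    numSpecial twistedTM n =
      if ∃ k : ℕ, 2 ^ (k + 1) < n ∧ n ≤ 3 * 2 ^ k then 4
      else if n = 4 ∨ ∃ k : ℕ, 3 * 2 ^ (k + 1) < n ∧ n ≤ 7 * 2 ^ k then 3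
      else 2 := by
  induction n using Nat.strong_induction_on with
  | _ n IH =>
    by_cases hsmall : n ≤ 8
    · have neg4 : ∀ nn, nn = 1 ∨ nn = 2 ∨ nn = 4 ∨ nn = 7 ∨ nn = 8 →
          ¬∃ k, 2^(k+1) < nn ∧ nn ≤ 3*2^k := by
        rintro nn hnn ⟨k, h1, h2⟩
        have e : (2:ℕ)^(k+1) = 2*2^k := by ring
        have l1 : 0 < (2:ℕ)^k := by positivity
        by_cases hk : k ≤ 1
        · have l2 : (2:ℕ)^k ≤ 2 := by
            calc (2:ℕ)^k ≤ 2^1 := Nat.pow_le_pow_right (by norm_num) hk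
            _ = 2 := by norm_num
          omega
        · have l3 : (4:ℕ) ≤ 2^k := by
            calc (4:ℕ) = 2^2 := by norm_num
            _ ≤ 2^k := Nat.pow_le_pow_right (by norm_num) (by omega)
          omega
      have neg3 : ∀ nn, nn = 1 ∨ nn = 2 ∨ nn = 8 →
          ¬(nn = 4 ∨ ∃ k, 3*2^(k+1) < nn ∧ nn ≤ 7*2^k) := by
        rintro nn hnn (h4 | ⟨k, h1, h2⟩)
        · omega
        have e : (2:ℕ)^(k+1) = 2*2^k := by ring
        have l1 : 0 < (2:ℕ)^k := by positivity
        by_cases hk : k ≤ 1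
        · have l2 : (2:ℕ)^k ≤ 2 := by
            calc (2:ℕ)^k ≤ 2^1 := Nat.pow_le_pow_right (by norm_num) hk
            _ = 2 := by norm_num
          omega
        · have l3 : (4:ℕ) ≤ 2^k := by
            calc (4:ℕ) = 2^2 := by norm_num
            _ ≤ 2^k := Nat.pow_le_pow_right (by norm_num) (by omega)
          omega
      interval_cases n
      · rw [base1, if_neg (neg4 1 (by omega)), if_neg (neg3 1 (by omega))]
      · rw [base2, if_neg (neg4 2 (by omega)), if_neg (neg3 2 (by omega))]
      · rw [base3, if_pos ⟨0, by norm_num⟩]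
      · rw [base4, if_neg (neg4 4 (by omega)), if_pos (Or.inl rfl)]
      · rw [base5, if_pos ⟨1, by norm_num⟩]
      · rw [base6, if_pos ⟨1, by norm_num⟩]
      · rw [base7, if_neg (neg4 7 (by omega)), if_pos (Or.inr ⟨0, by norm_num⟩)]
      · rw [base8, if_neg (neg4 8 (by omega)), if_neg (neg3 8 (by omega))]
    · push_neg at hsmall
      have h9 : 9 ≤ n := hsmall
      rw [halve n h9, IH ((n+1)/2) (by omega) (by omega)]
      have h3or : (n = 4 ∨ ∃ k, 3*2^(k+1) < n ∧ n ≤ 7*2^k) ↔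
          ((n+1)/2 = 4 ∨ ∃ k, 3*2^(k+1) < (n+1)/2 ∧ (n+1)/2 ≤ 7*2^k) := by
        constructor
        · rintro (h | h)
          · omega
          · exact Or.inr ((zone3_half n h9).mp h)
        · rintro (h | h)
          · omega
          · exact Or.inr ((zone3_half n h9).mpr h)
      by_cases hc4 : ∃ k, 2^(k+1) < (n+1)/2 ∧ (n+1)/2 ≤ 3*2^k
      · rw [if_pos hc4, if_pos ((zone4_half n h9).mpr hc4)]
      · rw [if_neg hc4, if_neg (fun h => hc4 ((zone4_half n h9).mp h))]
        by_cases hc3 : (n+1)/2 = 4 ∨ ∃ k, 3*2^(k+1) < (n+1)/2 ∧ (n+1)/2 ≤ 7*2^k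
        · rw [if_pos hc3, if_pos (h3or.mpr hc3)]
        · rw [if_neg hc3, if_neg (fun h => hc3 (h3or.mp h))]

open scoped Classical in
/-- The number of special factors of the twisted Thue–Morse word of each length `n > 0`. -/
theorem twistedTM_special_count (n : ℕ) (hn : 0 < n) :
    numSpecial twistedTM n =
      if ∃ k : ℕ, 2 ^ (k + 1) < n ∧ n ≤ 3 * 2 ^ k then 4
      else if n = 4 ∨ ∃ k : ℕ, 3 * 2 ^ (k + 1) < n ∧ n ≤ 7 * 2 ^ k then 3
      else 2 := twistedTM_special_count' n hn
end

section
/- Every symmetric square-free infinite ternary word U satisfies p_U(n) ≥ 6n − 6 for all n ≥ 2. Consequently, 6n − 6 is a lower bound on the minimum subword complexity over all symmetric square-free infinite ternary words. -/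
/-- A word is symmetric if its factor set is invariant under every permutation of the alphabet. -/
def SymmetricW {k : ℕ} (u : ℕ → Fin k) : Prop :=
  ∀ f : Equiv.Perm (Fin k), ∀ v : List (Fin k), IsFactor v u → IsFactor (v.map f) u

/-- A word is square-free if it contains no nonempty factor of the form `x ++ x`. -/
def SquareFreeW {k : ℕ} (u : ℕ → Fin k) : Prop :=
  ∀ x : List (Fin k), x ≠ [] → ¬ IsFactor (x ++ x) u

namespace SSF

lemma factorAt_length {k : ℕ} (u : ℕ → Fin k) (i m : ℕ) : (factorAt u i m).length = m := by
  simp [factorAt]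

lemma range_map_eq_iff {α : Type*} {n : ℕ} {f g : ℕ → α} :
    (List.range n).map f = (List.range n).map g ↔ ∀ l < n, f l = g l := by
  constructor
  · intro h l hl
    have := congrArg (fun w => w[l]?) h
    simpa [List.getElem?_map, List.getElem?_range hl] using this
  · intro h
    exact List.map_congr_left (fun a ha => h a (List.mem_range.mp ha))

lemma factorAt_eq_iff {k : ℕ} {u : ℕ → Fin k} {i i' n : ℕ} :
    factorAt u i n = factorAt u i' n ↔ ∀ l < n, u (i + l) = u (i' + l) :=
  range_map_eq_iff

lemma factorAt_add {k : ℕ} (u : ℕ → Fin k) (i m m' : ℕ) :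
    factorAt u i (m + m') = factorAt u i m ++ factorAt u (i + m) m' := by
  unfold factorAt
  rw [List.range_add, List.map_append, List.map_map]
  congr 1
  apply List.map_congr_left
  intro a _
  simp [Function.comp]
  congr 1
  omega

lemma factorAt_succ {k : ℕ} (u : ℕ → Fin k) (i m : ℕ) :
    factorAt u i (m + 1) = factorAt u i m ++ [u (i + m)] := by
  rw [factorAt_add]
  simp [factorAt, List.range_succ]

def Fset (U : ℕ → Fin 3) (n : ℕ) : Set (List (Fin 3)) :=
  {v : List (Fin 3) | v.length = n ∧ IsFactor v U}

lemma complexity_eq (U : ℕ → Fin 3) (n : ℕ) : complexity U n = (Fset U n).ncard := rfl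

lemma mem_Fset {U : ℕ → Fin 3} {n : ℕ} {v : List (Fin 3)} :
    v ∈ Fset U n ↔ ∃ i, v = factorAt U i n := by
  constructor
  · rintro ⟨hl, i, hv⟩
    rw [hl] at hv
    exact ⟨i, hv⟩
  · rintro ⟨i, rfl⟩
    exact ⟨factorAt_length U i n, i, by rw [factorAt_length]⟩

lemma finite_Fset (U : ℕ → Fin 3) (n : ℕ) : (Fset U n).Finite :=
  (List.finite_length_eq (Fin 3) n).subset (fun _ hv => hv.1)


lemma adj_ne {U : ℕ → Fin 3} (hsf : SquareFreeW U) (i : ℕ) : U i ≠ U (i + 1) := by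
  intro h
  apply hsf [U i] (by simp)
  refine ⟨i, ?_⟩
  have h2 : factorAt U i 2 = [U i, U (i + 1)] := by
    simp [factorAt, List.range_succ]
  show [U i, U i] = factorAt U i 2
  rw [h2, h]

/-- If there were no right-special factor of length `n`, the word would be
eventually periodic, contradicting square-freeness. -/
lemma exists_rightSpecial {U : ℕ → Fin 3} (hsf : SquareFreeW U) (n : ℕ) (hn : 1 ≤ n) :
    ∃ w ∈ Fset U n, ∃ a b : Fin 3, a ≠ b ∧
      (w ++ [a]) ∈ Fset U (n + 1) ∧ (w ++ [b]) ∈ Fset U (n + 1) := by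
  by_contra hcon
  push_neg at hcon
  have key : ∀ i j, factorAt U i n = factorAt U j n → U (i + n) = U (j + n) := by
    intro i j hij
    by_contra hne
    have h1 : factorAt U i n ++ [U (i + n)] ∈ Fset U (n + 1) := by
      rw [← factorAt_succ]; exact mem_Fset.mpr ⟨i, rfl⟩
    have h2 : factorAt U i n ++ [U (j + n)] ∈ Fset U (n + 1) := by
      rw [hij, ← factorAt_succ]; exact mem_Fset.mpr ⟨j, rfl⟩
    exact hcon (factorAt U i n) (mem_Fset.mpr ⟨i, rfl⟩) (U (i + n)) (U (j + n)) hne h1 h2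
  -- pigeonhole: two positions with the same length-`n` factor
  have hfin : Finite {l : List (Fin 3) // l.length = n} :=
    (List.finite_length_eq (Fin 3) n).to_subtype
  obtain ⟨i0, j0, hne0, heq0⟩ := Finite.exists_ne_map_eq_of_infinite
    (fun i : ℕ => (⟨factorAt U i n, factorAt_length U i n⟩ : {l : List (Fin 3) // l.length = n}))
  have heq0' : factorAt U i0 n = factorAt U j0 n := congrArg Subtype.val heq0
  obtain ⟨i, j, hij, heq⟩ : ∃ i j, i < j ∧ factorAt U i n = factorAt U j n := by
    rcases lt_or_gt_of_ne hne0 with h | h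
    · exact ⟨i0, j0, h, heq0'⟩
    · exact ⟨j0, i0, h, heq0'.symm⟩
  -- propagate the coincidence
  have prop : ∀ m, factorAt U (i + m) n = factorAt U (j + m) n := by
    intro m
    induction m with
    | zero => simpa using heq
    | succ m ih =>
      have hlast : U (i + m + n) = U (j + m + n) := key _ _ ih
      rw [factorAt_eq_iff] at ih ⊢
      intro l hl
      rcases Nat.lt_or_ge (l + 1) n with h1 | h1
      · have := ih (l + 1) h1
        have e1 : i + (m + 1) + l = i + m + (l + 1) := by omega
        have e2 : j + (m + 1) + l = j + m + (l + 1) := by omega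
        rw [e1, e2]; exact this
      · have hl1 : l + 1 = n := by omega
        have e1 : i + (m + 1) + l = i + m + n := by omega
        have e2 : j + (m + 1) + l = j + m + n := by omega
        rw [e1, e2]; exact hlast
  have per : ∀ m, U (i + m) = U (i + (j - i) + m) := by
    intro m
    have := (factorAt_eq_iff.mp (prop m)) 0 hn
    simp only [Nat.add_zero] at this
    have e : j + m = i + (j - i) + m := by omega
    rw [← e]; exact this
  -- build a square
  set q := j - i with hq
  have hq1 : 1 ≤ q := by omega
  apply hsf (factorAt U i q)
  · intro h
    have := congrArg List.length h
    rw [factorAt_length] at this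
    simp at this; omega
  · refine ⟨i, ?_⟩
    have hlen : (factorAt U i q ++ factorAt U i q).length = q + q := by
      simp [factorAt_length]
    rw [hlen, factorAt_add]
    congr 1
    rw [factorAt_eq_iff]
    intro l hl
    exact per l

lemma perm_eq_one : ∀ (f : Equiv.Perm (Fin 3)) (a b : Fin 3),
    a ≠ b → f a = a → f b = b → f = 1 := by decide

/-- A nontrivial permutation cannot fix a square-free factor of length `≥ 2`. -/
lemma perm_fix {U : ℕ → Fin 3} (hsf : SquareFreeW U) {n : ℕ} (hn : 2 ≤ n)
    {w : List (Fin 3)} (hw : w ∈ Fset U n) (f : Equiv.Perm (Fin 3))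
    (hf : w.map f = w) : f = 1 := by
  obtain ⟨i, rfl⟩ := mem_Fset.mp hw
  have hmap : (factorAt U i n).map f = (List.range n).map (fun j => f (U (i + j))) := by
    simp [factorAt, List.map_map]
  rw [hmap] at hf
  have hpt : ∀ l < n, f (U (i + l)) = U (i + l) := range_map_eq_iff.mp hf
  have h0 : f (U i) = U i := by simpa using hpt 0 (by omega)
  have h1 : f (U (i + 1)) = U (i + 1) := hpt 1 (by omega)
  have hne : U i ≠ U (i + 1) := adj_ne hsf i
  exact perm_eq_one f _ _ hne h0 h1


lemma append_singleton_inj {v v' : List (Fin 3)} {c c' : Fin 3}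
    (h : v ++ [c] = v' ++ [c']) (hl : v.length = v'.length) : v = v' ∧ c = c' := by
  obtain ⟨h1, h2⟩ := List.append_inj h hl
  exact ⟨h1, by simpa using h2⟩

lemma exists_ext {U : ℕ → Fin 3} {n : ℕ} {v : List (Fin 3)} (hv : v ∈ Fset U n) :
    ∃ c, v ++ [c] ∈ Fset U (n + 1) := by
  obtain ⟨i, rfl⟩ := mem_Fset.mp hv
  exact ⟨U (i + n), mem_Fset.mpr ⟨i, (factorAt_succ U i n).symm⟩⟩

lemma orbit_mem {U : ℕ → Fin 3} (hsym : SymmetricW U) {n : ℕ} {w : List (Fin 3)}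
    (hw : w ∈ Fset U n) (f : Equiv.Perm (Fin 3)) : w.map f ∈ Fset U n :=
  ⟨by simp [hw.1], hsym f w hw.2⟩

lemma orbit_inj {U : ℕ → Fin 3} (hsf : SquareFreeW U) {n : ℕ} (hn : 2 ≤ n)
    {w : List (Fin 3)} (hw : w ∈ Fset U n) :
    Function.Injective (fun f : Equiv.Perm (Fin 3) => w.map f) := by
  intro f g hfg
  simp only at hfg
  have h3 := congrArg (List.map ⇑(g⁻¹ : Equiv.Perm (Fin 3))) hfg
  rw [List.map_map, List.map_map] at h3
  have hid : (⇑(g⁻¹ : Equiv.Perm (Fin 3)) ∘ ⇑g) = id := by ext x; simp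
  rw [hid, List.map_id] at h3
  have h4 : w.map ⇑(g⁻¹ * f) = w := by
    rw [Equiv.Perm.coe_mul]; exact h3
  have h5 : g⁻¹ * f = 1 := perm_fix hsf hn hw _ h4
  have := inv_mul_eq_one.mp h5
  exact this.symm

lemma card_perm3 : Fintype.card (Equiv.Perm (Fin 3)) = 6 := by
  rw [Fintype.card_perm]; rfl

lemma card_step {U : ℕ → Fin 3} (hsf : SquareFreeW U) (hsym : SymmetricW U)
    {n : ℕ} (hn : 2 ≤ n) : (Fset U n).ncard + 6 ≤ (Fset U (n + 1)).ncard := by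
  classical
  obtain ⟨w, hw, a, b, hab, ha, hb⟩ := exists_rightSpecial hsf n (by omega)
  have hwlen : w.length = n := hw.1
  set O : Finset (List (Fin 3)) :=
    Finset.univ.image (fun f : Equiv.Perm (Fin 3) => w.map f) with hO
  have hOcard : O.card = 6 := by
    rw [hO, Finset.card_image_of_injective _ (orbit_inj hsf hn hw), Finset.card_univ,
      card_perm3]
  have hOmem : ∀ v ∈ O, v ∈ Fset U n ∧ ∃ a' b' : Fin 3, a' ≠ b' ∧
      (v ++ [a']) ∈ Fset U (n + 1) ∧ (v ++ [b']) ∈ Fset U (n + 1) := by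
    intro v hv
    simp only [hO, Finset.mem_image, Finset.mem_univ, true_and] at hv
    obtain ⟨f, rfl⟩ := hv
    refine ⟨orbit_mem hsym hw f, f a, f b, fun h => hab (f.injective h), ?_, ?_⟩
    · have h2 := orbit_mem hsym ha f
      have h3 : (w ++ [a]).map ⇑f = w.map ⇑f ++ [f a] := by simp
      rwa [h3] at h2
    · have h2 := orbit_mem hsym hb f
      have h3 : (w ++ [b]).map ⇑f = w.map ⇑f ++ [f b] := by simp
      rwa [h3] at h2
  -- choice of extensions
  let e1 : List (Fin 3) → Fin 3 := fun v =>
    if h : ∃ c, v ++ [c] ∈ Fset U (n + 1) then h.choose else 0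
  have he1 : ∀ v ∈ Fset U n, v ++ [e1 v] ∈ Fset U (n + 1) := by
    intro v hv
    have h := exists_ext hv
    simp only [e1, dif_pos h]
    exact h.choose_spec
  have exof2 : ∀ v ∈ O, ∃ c, c ≠ e1 v ∧ v ++ [c] ∈ Fset U (n + 1) := by
    intro v hv
    obtain ⟨_, a', b', hne, ha', hb'⟩ := hOmem v hv
    by_cases h : a' = e1 v
    · exact ⟨b', by rw [← h]; exact hne.symm, hb'⟩
    · exact ⟨a', h, ha'⟩
  let e2 : List (Fin 3) → Fin 3 := fun v =>
    if h : ∃ c, c ≠ e1 v ∧ v ++ [c] ∈ Fset U (n + 1) then h.choose else 0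
  have he2 : ∀ v ∈ O, e2 v ≠ e1 v ∧ v ++ [e2 v] ∈ Fset U (n + 1) := by
    intro v hv
    have h := exof2 v hv
    simp only [e2, dif_pos h]
    exact h.choose_spec
  -- finsets
  have hfinn := finite_Fset U n
  have hfinn1 := finite_Fset U (n + 1)
  set A := hfinn.toFinset with hA
  set B := hfinn1.toFinset with hB
  have hlenA : ∀ v ∈ A, v.length = n := fun v hv => (hfinn.mem_toFinset.mp hv).1
  have hOsubA : O ⊆ A := fun v hv => hfinn.mem_toFinset.mpr (hOmem v hv).1
  set A1 := A.image (fun v => v ++ [e1 v]) with hA1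
  set O1 := O.image (fun v => v ++ [e2 v]) with hO1
  have hA1card : A1.card = A.card := by
    apply Finset.card_image_of_injOn
    intro x hx y hy hxy
    exact (append_singleton_inj hxy (by rw [hlenA x hx, hlenA y hy])).1
  have hO1card : O1.card = 6 := by
    rw [hO1, Finset.card_image_of_injOn, hOcard]
    intro x hx y hy hxy
    exact (append_singleton_inj hxy
      (by rw [hlenA x (hOsubA hx), hlenA y (hOsubA hy)])).1
  have hdisj : Disjoint A1 O1 := by
    rw [Finset.disjoint_left]
    intro x hx hx2
    obtain ⟨v, hv, rfl⟩ := Finset.mem_image.mp hx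
    obtain ⟨v', hv', heq⟩ := Finset.mem_image.mp hx2
    obtain ⟨rfl, hc⟩ := append_singleton_inj heq
      (by rw [hlenA v' (hOsubA hv'), hlenA v hv])
    exact (he2 v' hv').1 hc
  have hsub : A1 ∪ O1 ⊆ B := by
    intro x hx
    rcases Finset.mem_union.mp hx with h | h
    · obtain ⟨v, hv, rfl⟩ := Finset.mem_image.mp h
      exact hfinn1.mem_toFinset.mpr (he1 v (hfinn.mem_toFinset.mp hv))
    · obtain ⟨v, hv, rfl⟩ := Finset.mem_image.mp h
      exact hfinn1.mem_toFinset.mpr (he2 v hv).2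
  have hcard : A.card + 6 ≤ B.card := by
    calc A.card + 6 = A1.card + O1.card := by rw [hA1card, hO1card]
    _ = (A1 ∪ O1).card := (Finset.card_union_of_disjoint hdisj).symm
    _ ≤ B.card := Finset.card_le_card hsub
  rwa [Set.ncard_eq_toFinset_card _ hfinn, Set.ncard_eq_toFinset_card _ hfinn1]

lemma base_card {U : ℕ → Fin 3} (hsf : SquareFreeW U) (hsym : SymmetricW U) :
    6 ≤ (Fset U 2).ncard := by
  classical
  have hw : factorAt U 0 2 ∈ Fset U 2 := mem_Fset.mpr ⟨0, rfl⟩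
  set w := factorAt U 0 2 with hwdef
  set O : Finset (List (Fin 3)) :=
    Finset.univ.image (fun f : Equiv.Perm (Fin 3) => w.map f) with hO
  have hOcard : O.card = 6 := by
    rw [hO, Finset.card_image_of_injective _ (orbit_inj hsf le_rfl hw), Finset.card_univ,
      card_perm3]
  have hfin := finite_Fset U 2
  have hOsub : O ⊆ hfin.toFinset := by
    intro v hv
    simp only [hO, Finset.mem_image, Finset.mem_univ, true_and] at hv
    obtain ⟨f, rfl⟩ := hv
    exact hfin.mem_toFinset.mpr (orbit_mem hsym hw f)
  rw [Set.ncard_eq_toFinset_card _ hfin, ← hOcard]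
  exact Finset.card_le_card hOsub

end SSF

/-- Every symmetric square-free infinite ternary word has subword complexity
at least `6n - 6` for all `n ≥ 2`. -/
theorem symmetric_squarefree_lower_bound (U : ℕ → Fin 3)
    (hsf : SquareFreeW U) (hsym : SymmetricW U) :
    ∀ n, 2 ≤ n → 6 * n - 6 ≤ complexity U n := by
  intro n hn
  induction n, hn using Nat.le_induction with
  | base =>
    have := SSF.base_card hsf hsym
    rw [SSF.complexity_eq]
    omega
  | succ n hn ih =>
    have h := SSF.card_step hsf hsym hn
    rw [SSF.complexity_eq] at ih ⊢
    omega
end
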